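/- arXiv:2009.11083 — 4 statements merged into one kernel-verified Lean document; each statement's English description precedes it below -/
import Mathlib

section
/- Let μ be a positive Radon measure on Ω and let D_μ = {λ ∈ F' : ∫_Ω e^{−⟨λ,h⟩} dμ(h) < ∞}. Then D_μ + cl(Ω') ⊆ D_μ (so D_μ is a union of translates of cl(Ω')); moreover, if D_μ ≠ ∅, then μ(Ω ∩ K) < ∞ for every compact subset K of F, i.e. μ extends to a Radon measure on cl(Ω). -/
open Set MeasureTheory
open scoped ENNReal

/-- For a positive Radon measure `μ` on a proper open convex cone `Ω`,
the domain `D_μ = {λ : ∫_Ω e^{−⟨λ,h⟩} dμ < ∞}` of the Laplace transform satisfies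
`D_μ + cl(Ω') ⊆ D_μ`; moreover, if `D_μ ≠ ∅` then `μ` is finite on `Ω ∩ K` for every
compact `K ⊆ F`, i.e. `μ` extends to a Radon measure on `cl Ω`. -/
theorem stmt_4 {F : Type*}
    [NormedAddCommGroup F] [NormedSpace ℝ F] [FiniteDimensional ℝ F]
    [MeasurableSpace F] [BorelSpace F]
    (Ω : Set F) (hΩo : IsOpen Ω) (hΩc : Convex ℝ Ω)
    (hΩcone : ∀ r : ℝ, 0 < r → ∀ h ∈ Ω, r • h ∈ Ω)
    (hproper : ∀ x ∈ closure Ω, -x ∈ closure Ω → x = 0)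
    (μ : Measure F) (hsupp : μ Ωᶜ = 0)
    (hRadon : ∀ K : Set F, IsCompact K → K ⊆ Ω → μ K < ⊤)
    (Ω' : Set (F →L[ℝ] ℝ))
    (hΩ' : Ω' = {l : F →L[ℝ] ℝ | ∀ h ∈ closure Ω, h ≠ 0 → 0 < l h})
    (Dμ : Set (F →L[ℝ] ℝ))
    (hDμ : Dμ = {l : F →L[ℝ] ℝ |
      ∫⁻ h, ENNReal.ofReal (Real.exp (-(l h))) ∂μ < ⊤}) :
    (∀ l ∈ Dμ, ∀ ρ ∈ closure Ω', l + ρ ∈ Dμ) ∧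
    (Dμ.Nonempty → ∀ K : Set F, IsCompact K → μ (Ω ∩ K) < ⊤) := by
  constructor
  · intro l hl ρ hρ
    rw [hDμ] at hl ⊢
    have hρnn : ∀ h ∈ Ω, 0 ≤ ρ h := by
      intro h hh
      have hcl : h ∈ closure Ω := subset_closure hh
      have hsub : closure Ω' ⊆ {p : F →L[ℝ] ℝ | 0 ≤ p h} := by
        apply closure_minimal
        · intro p hp
          rcases eq_or_ne h 0 with rfl | hne
          · simp
          · rw [hΩ'] at hp
            exact (hp h hcl hne).le
        · exact isClosed_le continuous_const (ContinuousLinearMap.apply ℝ ℝ h).continuous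
      exact hsub hρ
    have hae : ∀ᵐ h ∂μ, h ∈ Ω := by
      rw [ae_iff]
      exact hsupp
    calc ∫⁻ h, ENNReal.ofReal (Real.exp (-((l + ρ) h))) ∂μ
        ≤ ∫⁻ h, ENNReal.ofReal (Real.exp (-(l h))) ∂μ := by
          apply lintegral_mono_ae
          filter_upwards [hae] with h hh
          apply ENNReal.ofReal_le_ofReal
          apply Real.exp_le_exp.2
          simp only [ContinuousLinearMap.add_apply]
          linarith [hρnn h hh]
      _ < ⊤ := hl
  · rintro ⟨l, hl⟩ K hK
    rw [hDμ] at hl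
    simp only [Set.mem_setOf_eq] at hl
    obtain ⟨R, hR⟩ := hK.isBounded.exists_norm_le
    set C := ‖l‖ * R with hC
    have hmeas : MeasurableSet (Ω ∩ K) := hΩo.measurableSet.inter hK.measurableSet
    have key : ENNReal.ofReal (Real.exp (-C)) * μ (Ω ∩ K) ≤
        ∫⁻ h, ENNReal.ofReal (Real.exp (-(l h))) ∂μ := by
      calc ENNReal.ofReal (Real.exp (-C)) * μ (Ω ∩ K)
          = ∫⁻ _ in Ω ∩ K, ENNReal.ofReal (Real.exp (-C)) ∂μ := by
            rw [setLIntegral_const]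
        _ ≤ ∫⁻ h in Ω ∩ K, ENNReal.ofReal (Real.exp (-(l h))) ∂μ := by
            apply setLIntegral_mono' hmeas
            intro h hh
            apply ENNReal.ofReal_le_ofReal
            apply Real.exp_le_exp.2
            have h1 : l h ≤ ‖l‖ * ‖h‖ := le_trans (le_abs_self _) (l.le_opNorm h)
            have h2 : ‖h‖ ≤ R := hR h hh.2
            have h3 : ‖l‖ * ‖h‖ ≤ ‖l‖ * R := by
              exact mul_le_mul_of_nonneg_left h2 (norm_nonneg l)
            simp only [hC, neg_le_neg_iff]
            linarith
        _ ≤ _ := setLIntegral_le_lintegral _ _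
    have hpos : (0 : ℝ≥0∞) < ENNReal.ofReal (Real.exp (-C)) :=
      ENNReal.ofReal_pos.2 (Real.exp_pos _)
    by_contra hcon
    rw [not_lt, top_le_iff] at hcon
    rw [hcon, ENNReal.mul_top hpos.ne'] at key
    exact absurd (top_le_iff.1 key) hl.ne
end

section
/- Let ν be a positive Radon measure on the dual cone Ω' such that ∫_{Ω'} e^{−⟨λ,k⟩} dν(λ) < ∞ for every k ∈ Ω. Let τ : Ω' → [0,∞] be measurable and h₀ ∈ Ω with ∫_{Ω'} τ(λ)² e^{−2⟨λ,h₀⟩} dν(λ) < ∞. Then for every p ∈ [1,2] and every h ∈ h₀ + Ω, the quantity g_p(h) := ∫_{Ω'} τ(λ)^p e^{−p⟨λ,h⟩} dν(λ) is finite; moreover g_p is decreasing for the cone order (if h'' − h ∈ cl(Ω) then g_p(h'') ≤ g_p(h)) and continuous on h₀ + Ω. -/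
open Set MeasureTheory Filter
open scoped ENNReal Topology

private lemma rpow_le_one_add' (x : ℝ≥0∞) {q : ℝ} (hq0 : 0 ≤ q) (hq1 : q ≤ 1) :
    x ^ q ≤ 1 + x := by
  rcases le_or_gt x 1 with hx | hx
  · exact le_trans (ENNReal.rpow_le_one hx hq0) le_self_add
  · calc x ^ q ≤ x ^ (1 : ℝ) := ENNReal.rpow_le_rpow_of_exponent_le hx.le hq1
    _ = x := ENNReal.rpow_one x
    _ ≤ 1 + x := le_add_self

private lemma alg_id (t : ℝ≥0∞) (a b p : ℝ) (hp : 0 ≤ p) :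
    t ^ p * ENNReal.ofReal (Real.exp (-(p * b))) =
      (t ^ (2 : ℝ) * ENNReal.ofReal (Real.exp (-(2 * a)))) ^ (p / 2) *
        ENNReal.ofReal (Real.exp (-(p * (b - a)))) := by
  rw [ENNReal.mul_rpow_of_nonneg _ _ (div_nonneg hp zero_le_two), ← ENNReal.rpow_mul,
    ENNReal.ofReal_rpow_of_pos (Real.exp_pos _), ← Real.exp_mul]
  have h2 : (2 : ℝ) * (p / 2) = p := by ring
  rw [h2]
  rw [mul_assoc, ← ENNReal.ofReal_mul (Real.exp_pos _).le, ← Real.exp_add]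
  congr 2
  ring

/-- Let `ν` be a positive Radon measure on the dual cone `Ω'` whose
Laplace transform is finite on `Ω`, and let `τ ≥ 0` be measurable with
`∫ τ(λ)² e^{−2⟨λ,h₀⟩} dν < ∞` for some `h₀ ∈ Ω`. Then for every `p ∈ [1,2]` the
function `g_p(h) = ∫ τ(λ)^p e^{−p⟨λ,h⟩} dν(λ)` is finite on `h₀ + Ω`, decreasing for
the cone order, and continuous on `h₀ + Ω`. -/
theorem stmt_6 {F : Type*}
    [NormedAddCommGroup F] [NormedSpace ℝ F] [FiniteDimensional ℝ F]
    [MeasurableSpace (F →L[ℝ] ℝ)] [BorelSpace (F →L[ℝ] ℝ)]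
    (Ω : Set F) (hΩo : IsOpen Ω) (hΩc : Convex ℝ Ω)
    (hΩcone : ∀ r : ℝ, 0 < r → ∀ h ∈ Ω, r • h ∈ Ω)
    (hproper : ∀ x ∈ closure Ω, -x ∈ closure Ω → x = 0)
    (Ω' : Set (F →L[ℝ] ℝ))
    (hΩ' : Ω' = {l : F →L[ℝ] ℝ | ∀ h ∈ closure Ω, h ≠ 0 → 0 < l h})
    (ν : Measure (F →L[ℝ] ℝ)) (hνsupp : ν Ω'ᶜ = 0)
    (hνexp : ∀ k ∈ Ω, ∫⁻ l, ENNReal.ofReal (Real.exp (-(l k))) ∂ν < ⊤)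
    (τ : (F →L[ℝ] ℝ) → ℝ≥0∞) (hτ : Measurable τ)
    (h₀ : F) (hh₀ : h₀ ∈ Ω)
    (hfin : ∫⁻ l, τ l ^ (2 : ℝ) * ENNReal.ofReal (Real.exp (-(2 * l h₀))) ∂ν < ⊤)
    (g : ℝ → F → ℝ≥0∞)
    (hg : ∀ (p : ℝ) (h : F),
      g p h = ∫⁻ l, τ l ^ p * ENNReal.ofReal (Real.exp (-(p * l h))) ∂ν) :
    ∀ p ∈ Set.Icc (1 : ℝ) 2,
      (∀ h : F, h - h₀ ∈ Ω → g p h < ⊤) ∧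
      (∀ h : F, h - h₀ ∈ Ω → ∀ h'' : F, h'' - h ∈ closure Ω → g p h'' ≤ g p h) ∧
      ContinuousOn (g p) {h : F | h - h₀ ∈ Ω} := by
  intro p hp
  obtain ⟨hp1, hp2⟩ := hp
  have hp0 : (0 : ℝ) < p := lt_of_lt_of_le one_pos hp1
  -- a.e. every point is in Ω'
  have hae : ∀ᵐ l ∂ν, l ∈ Ω' := by
    rw [ae_iff]
    exact hνsupp
  -- nonnegativity on the closure
  have hpos : ∀ l ∈ Ω', ∀ x ∈ closure Ω, 0 ≤ l x := by
    intro l hl x hx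
    rcases eq_or_ne x 0 with rfl | hx0
    · simp
    · rw [hΩ'] at hl
      exact (hl x hx hx0).le
  -- evaluation is continuous / measurable
  have heval : ∀ x : F, Continuous fun l : F →L[ℝ] ℝ => l x := fun x =>
    (ContinuousLinearMap.apply ℝ ℝ x).continuous
  have hmeas : ∀ (q : ℝ) (h : F), Measurable fun l : F →L[ℝ] ℝ =>
      τ l ^ q * ENNReal.ofReal (Real.exp (-(q * l h))) := by
    intro q h
    exact (hτ.pow_const _).mul
      ((ENNReal.measurable_ofReal.comp (Real.measurable_exp.comp
        ((measurable_const.mul (heval h).measurable).neg)))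
        )
  -- monotonicity of the integrand
  have hmono : ∀ h h'' : F, h'' - h ∈ closure Ω → ∀ l ∈ Ω',
      τ l ^ p * ENNReal.ofReal (Real.exp (-(p * l h''))) ≤
        τ l ^ p * ENNReal.ofReal (Real.exp (-(p * l h))) := by
    intro h h'' hcl l hl
    have h0 : 0 ≤ l (h'' - h) := hpos l hl _ hcl
    rw [map_sub] at h0
    have : l h ≤ l h'' := by linarith
    exact mul_le_mul_right (ENNReal.ofReal_le_ofReal (Real.exp_le_exp.2 (by nlinarith))) _
  have hmono' : ∀ h h'' : F, h'' - h ∈ closure Ω → g p h'' ≤ g p h := by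
    intro h h'' hcl
    rw [hg, hg]
    exact lintegral_mono_ae (hae.mono fun l hl => hmono h h'' hcl l hl)
  -- finiteness
  have hfine : ∀ h : F, h - h₀ ∈ Ω → g p h < ⊤ := by
    intro h hh
    rw [hg]
    have hbound : ∀ᵐ l ∂ν,
        τ l ^ p * ENNReal.ofReal (Real.exp (-(p * l h))) ≤
          ENNReal.ofReal (Real.exp (-(p * (l h - l h₀)))) +
            τ l ^ (2 : ℝ) * ENNReal.ofReal (Real.exp (-(2 * l h₀))) := by
      filter_upwards [hae] with l hl
      rw [alg_id (τ l) (l h₀) (l h) p hp0.le]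
      set A := τ l ^ (2 : ℝ) * ENNReal.ofReal (Real.exp (-(2 * l h₀))) with hA
      set E := ENNReal.ofReal (Real.exp (-(p * (l h - l h₀)))) with hE
      have h1 : A ^ (p / 2) ≤ 1 + A :=
        rpow_le_one_add' A (by positivity) (by linarith)
      have hE1 : E ≤ 1 := by
        rw [hE]
        have h0 : 0 ≤ l (h - h₀) := hpos l hl _ (subset_closure hh)
        rw [map_sub] at h0
        calc ENNReal.ofReal (Real.exp (-(p * (l h - l h₀)))) ≤
            ENNReal.ofReal (Real.exp 0) := by
              apply ENNReal.ofReal_le_ofReal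
              apply Real.exp_le_exp.2
              nlinarith
          _ = 1 := by simp
      calc A ^ (p / 2) * E ≤ (1 + A) * E := mul_le_mul_left h1 _
        _ = E + A * E := by ring
        _ ≤ E + A * 1 := add_le_add_right (mul_le_mul_right hE1 _) _
        _ = E + A := by rw [mul_one]
    calc ∫⁻ l, τ l ^ p * ENNReal.ofReal (Real.exp (-(p * l h))) ∂ν ≤
        ∫⁻ l, (ENNReal.ofReal (Real.exp (-(p * (l h - l h₀)))) +
          τ l ^ (2 : ℝ) * ENNReal.ofReal (Real.exp (-(2 * l h₀)))) ∂ν :=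
          lintegral_mono_ae hbound
      _ = (∫⁻ l, ENNReal.ofReal (Real.exp (-(p * (l h - l h₀)))) ∂ν) +
          ∫⁻ l, τ l ^ (2 : ℝ) * ENNReal.ofReal (Real.exp (-(2 * l h₀))) ∂ν := by
          apply lintegral_add_left
          exact ENNReal.measurable_ofReal.comp (Real.measurable_exp.comp
            ((measurable_const.mul (((heval h).sub (heval h₀)).measurable)).neg))
      _ < ⊤ := by
          apply ENNReal.add_lt_top.2
          refine ⟨?_, hfin⟩
          have hk : p • (h - h₀) ∈ Ω := hΩcone p hp0 _ hh
          have h1 := hνexp _ hk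
          have heq : (fun l : F →L[ℝ] ℝ =>
              ENNReal.ofReal (Real.exp (-(p * (l h - l h₀))))) =
              fun l : F →L[ℝ] ℝ => ENNReal.ofReal (Real.exp (-(l (p • (h - h₀))))) := by
            funext l
            rw [l.map_smul, l.map_sub, smul_eq_mul]
          rw [heq]
          exact h1
  refine ⟨hfine, fun h _ h'' hcl => hmono' h h'' hcl, ?_⟩
  -- continuity
  have hgfun : g p = fun h => ∫⁻ l, τ l ^ p *
      ENNReal.ofReal (Real.exp (-(p * l h))) ∂ν := funext (hg p)
  intro h₁ hh₁
  simp only [mem_setOf_eq] at hh₁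
  set h' := h₀ + (2 : ℝ)⁻¹ • (h₁ - h₀) with hh'def
  have hh' : h' - h₀ ∈ Ω := by
    have : h' - h₀ = (2 : ℝ)⁻¹ • (h₁ - h₀) := by rw [hh'def]; abel
    rw [this]
    exact hΩcone _ (by norm_num) _ hh₁
  have h₁h' : h₁ - h' ∈ Ω := by
    have : h₁ - h' = (2 : ℝ)⁻¹ • (h₁ - h₀) := by rw [hh'def]; module
    rw [this]
    exact hΩcone _ (by norm_num) _ hh₁
  have hU : ∀ᶠ h in 𝓝 h₁, h - h' ∈ Ω :=
    (hΩo.preimage (continuous_id.sub continuous_const)).eventually_mem h₁h'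
  have htend : Tendsto (fun h => ∫⁻ l, τ l ^ p *
      ENNReal.ofReal (Real.exp (-(p * l h))) ∂ν) (𝓝 h₁)
      (𝓝 (∫⁻ l, τ l ^ p * ENNReal.ofReal (Real.exp (-(p * l h₁))) ∂ν)) := by
    apply tendsto_lintegral_filter_of_dominated_convergence
      (fun l => τ l ^ p * ENNReal.ofReal (Real.exp (-(p * l h'))))
      (Eventually.of_forall fun h => hmeas p h)
      ?_ ?_ ?_
    · filter_upwards [hU] with h hh
      filter_upwards [hae] with l hl
      exact hmono h' h (subset_closure hh) l hl
    · have hfin' := hfine h' hh'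
      rw [hg] at hfin'
      simpa using hfin'.ne
    · apply Eventually.of_forall
      intro l
      have hc : Tendsto (fun h : F => ENNReal.ofReal (Real.exp (-(p * l h)))) (𝓝 h₁)
          (𝓝 (ENNReal.ofReal (Real.exp (-(p * l h₁))))) := by
        apply (ENNReal.continuous_ofReal.comp (Real.continuous_exp.comp
          ((continuous_const.mul l.continuous).neg))).tendsto
      exact ENNReal.Tendsto.const_mul hc
        (Or.inl (by positivity))
  rw [hgfun]
  exact ContinuousAt.continuousWithinAt htend
end

section
/- Let J and K be sets and p, q ∈ (0,∞]. Set p' := (max(1,p))' and q' := (max(1,q))' (so p' = ∞ when p ≤ 1 and 1/p + 1/p' = 1 when p ≥ 1). Then the bilinear map (λ,μ) ↦ Σ_{(j,k)∈J×K} λ_{j,k} μ_{j,k} induces an isometric isomorphism of ℓ^{p',q'}(J,K) onto the topological dual of ℓ^{p,q}_0(J,K): every continuous linear functional L on ℓ^{p,q}_0(J,K) is of this form for a unique μ ∈ ℓ^{p',q'}(J,K), and the operator norm of L equals ‖μ‖_{ℓ^{p',q'}}. -/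
open scoped ENNReal NNReal
open Function

/-- The `ℓ^p` (quasi-)norm of a family of complex numbers, `p ∈ (0,∞]`. -/
noncomputable def ellpNorm {ι : Type*} (p : ℝ≥0∞) (f : ι → ℂ) : ℝ≥0∞ :=
  if p = ∞ then ⨆ i, (‖f i‖₊ : ℝ≥0∞)
  else (∑' i, (‖f i‖₊ : ℝ≥0∞) ^ p.toReal) ^ (1 / p.toReal)

/-- The mixed `ℓ^{p,q}` (quasi-)norm on `ℂ^{J×K}`: the `ℓ^q` norm over `K` of the
`ℓ^p` norms over `J`. -/
noncomputable def ellpqNorm {J K : Type*} (p q : ℝ≥0∞) (f : J × K → ℂ) : ℝ≥0∞ :=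
  if q = ∞ then ⨆ k, ellpNorm p (fun j => f (j, k))
  else (∑' k, (ellpNorm p (fun j => f (j, k))) ^ q.toReal) ^ (1 / q.toReal)

/-- The conjugate exponent `p' = (max(1,p))'`: `p' = ∞` for `p ≤ 1`,
`1/p + 1/p' = 1` for `1 ≤ p ≤ ∞`. -/
noncomputable def conjExp (p : ℝ≥0∞) : ℝ≥0∞ :=
  if p ≤ 1 then ∞ else if p = ∞ then 1 else p / (p - 1)

/-- Membership in `ℓ^{p,q}_0(J,K)`, the closure of the finitely supported families in
`ℓ^{p,q}(J,K)`. -/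
def memEllpq0 {J K : Type*} (p q : ℝ≥0∞) (f : J × K → ℂ) : Prop :=
  ellpqNorm p q f < ⊤ ∧
  ∀ ε : ℝ, 0 < ε → ∃ g : J × K → ℂ, (Function.support g).Finite ∧
    ellpqNorm p q (f - g) < ENNReal.ofReal ε

namespace Stmt14


variable {ι J K : Type*}

open Classical in
lemma _dec : True := trivial

/-- ℝ≥0∞-valued ℓ^p norm. -/
noncomputable def eN (p : ℝ≥0∞) (a : ι → ℝ≥0∞) : ℝ≥0∞ :=
  if p = ∞ then ⨆ i, a i else (∑' i, a i ^ p.toReal) ^ (1 / p.toReal)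

lemma eN_top (a : ι → ℝ≥0∞) : eN ∞ a = ⨆ i, a i := by simp [eN]

lemma eN_ne_top {p : ℝ≥0∞} (hp : p ≠ ∞) (a : ι → ℝ≥0∞) :
    eN p a = (∑' i, a i ^ p.toReal) ^ (1 / p.toReal) := by simp [eN, hp]

lemma toReal_pos {p : ℝ≥0∞} (hp : 0 < p) (hp' : p ≠ ∞) : 0 < p.toReal :=
  ENNReal.toReal_pos hp.ne' hp'

lemma eN_mono {p : ℝ≥0∞} {a b : ι → ℝ≥0∞} (h : ∀ i, a i ≤ b i) : eN p a ≤ eN p b := by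
  by_cases hp : p = ∞
  · subst hp; rw [eN_top, eN_top]; exact iSup_mono h
  · rw [eN_ne_top hp, eN_ne_top hp]
    refine ENNReal.rpow_le_rpow (ENNReal.tsum_le_tsum fun i => ?_) (by positivity)
    exact ENNReal.rpow_le_rpow (h i) ENNReal.toReal_nonneg

lemma le_eN {p : ℝ≥0∞} (hp : 0 < p) (a : ι → ℝ≥0∞) (i : ι) : a i ≤ eN p a := by
  by_cases hp' : p = ∞
  · subst hp'; rw [eN_top]; exact le_iSup a i
  · rw [eN_ne_top hp']
    have hr := toReal_pos hp hp'
    calc a i = (a i ^ p.toReal) ^ (1 / p.toReal) := by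
          rw [one_div, ENNReal.rpow_rpow_inv hr.ne']
      _ ≤ _ := ENNReal.rpow_le_rpow (ENNReal.le_tsum i) (by positivity)

lemma eN_zero {p : ℝ≥0∞} (hp : 0 < p) : eN p (fun _ : ι => 0) = 0 := by
  by_cases hp' : p = ∞
  · subst hp'; simp [eN_top]
  · rw [eN_ne_top hp']
    have hr := toReal_pos hp hp'
    simp only [ENNReal.zero_rpow_of_pos hr, tsum_zero,
      ENNReal.zero_rpow_of_pos (show (0:ℝ) < 1 / p.toReal by positivity)]

lemma eN_eq_zero {p : ℝ≥0∞} (hp : 0 < p) {a : ι → ℝ≥0∞} (h : eN p a = 0) : ∀ i, a i = 0 :=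
  fun i => le_antisymm (h ▸ le_eN hp a i) (zero_le)

lemma eN_smul {p : ℝ≥0∞} (hp : 0 < p) (c : ℝ≥0∞) (a : ι → ℝ≥0∞) :
    eN p (fun i => c * a i) = c * eN p a := by
  by_cases hp' : p = ∞
  · subst hp'; rw [eN_top, eN_top, ENNReal.mul_iSup]
  · rw [eN_ne_top hp', eN_ne_top hp']
    have hr := toReal_pos hp hp'
    have : ∀ i, (c * a i) ^ p.toReal = c ^ p.toReal * a i ^ p.toReal := fun i =>
      ENNReal.mul_rpow_of_nonneg _ _ hr.le
    simp_rw [this, ENNReal.tsum_mul_left]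
    rw [ENNReal.mul_rpow_of_nonneg _ _ (by positivity : (0:ℝ) ≤ 1 / p.toReal),
      ← ENNReal.rpow_mul, mul_one_div, div_self hr.ne', ENNReal.rpow_one]

open Classical in
lemma eN_single {p : ℝ≥0∞} (hp : 0 < p) (i0 : ι) (v : ℝ≥0∞) :
    eN p (fun i => if i = i0 then v else 0) = v := by
  by_cases hp' : p = ∞
  · subst hp'; rw [eN_top]
    refine le_antisymm (iSup_le fun i => ?_) ?_
    · split <;> simp
    · have := le_iSup (fun i => if i = i0 then v else 0) i0
      simpa using this
  · rw [eN_ne_top hp']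
    have hr := toReal_pos hp hp'
    have : ∀ i, (if i = i0 then v else 0) ^ p.toReal = if i = i0 then v ^ p.toReal else 0 := by
      intro i; split <;> simp [ENNReal.zero_rpow_of_pos hr]
    simp_rw [this, tsum_ite_eq]
    rw [one_div, ENNReal.rpow_rpow_inv hr.ne']

lemma eN_lt_top {p : ℝ≥0∞} (hp : 0 < p) {a : ι → ℝ≥0∞} (hfin : (support a).Finite)
    (hv : ∀ i, a i ≠ ∞) : eN p a < ∞ := by
  classical
  have hsum : ∑' i, a i < ∞ := by
    rw [tsum_eq_sum (s := hfin.toFinset) (by intro i hi; simpa using hi)]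
    exact ENNReal.sum_lt_top.mpr fun i _ => (hv i).lt_top
  by_cases hp' : p = ∞
  · subst hp'; rw [eN_top]
    exact lt_of_le_of_lt (iSup_le fun i => ENNReal.le_tsum i) hsum
  · rw [eN_ne_top hp']
    have hr := toReal_pos hp hp'
    have h1 : ∑' i, a i ^ p.toReal < ∞ := by
      rw [tsum_eq_sum (s := hfin.toFinset)
        (by intro i hi; simp only [Set.Finite.mem_toFinset, mem_support, not_not] at hi
            simp [hi, ENNReal.zero_rpow_of_pos hr])]
      exact ENNReal.sum_lt_top.mpr fun i _ => ENNReal.rpow_lt_top_of_nonneg hr.le (hv i)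
    exact ENNReal.rpow_lt_top_of_nonneg (by positivity) h1.ne




lemma conjExp_of_le_one {p : ℝ≥0∞} (h : p ≤ 1) : conjExp p = ∞ := by simp [conjExp, h]

lemma conjExp_top : conjExp ∞ = 1 := by simp [conjExp]

lemma conjExp_of_lt {p : ℝ≥0∞} (h1 : 1 < p) (h2 : p ≠ ∞) : conjExp p = p / (p - 1) := by
  simp [conjExp, not_le.mpr h1, h2]

lemma conjExp_pos (p : ℝ≥0∞) : 0 < conjExp p := by
  rcases le_or_gt p 1 with h | h
  · simp [conjExp_of_le_one h]
  · by_cases h2 : p = ∞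
    · simp [h2, conjExp_top]
    · rw [conjExp_of_lt h h2]
      exact ENNReal.div_pos (by rintro rfl; exact absurd h (by simp)) (ENNReal.sub_ne_top h2)

lemma conjExp_facts {p : ℝ≥0∞} (h1 : 1 < p) (h2 : p ≠ ∞) :
    conjExp p ≠ ∞ ∧ (p.toReal).HolderConjugate ((conjExp p).toReal) := by
  have hp1 : (1:ℝ) < p.toReal := by
    rw [← ENNReal.toReal_one]
    exact ENNReal.toReal_lt_toReal (by simp) h2 |>.mpr h1
  have hsub : (p - 1) ≠ 0 := (tsub_pos_of_lt h1).ne'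
  have hsubtop : (p - 1) ≠ ∞ := ENNReal.sub_ne_top h2
  have htopc : conjExp p ≠ ∞ := by
    rw [conjExp_of_lt h1 h2]
    simp [ENNReal.div_eq_top, hsub, h2]
  refine ⟨htopc, ?_⟩
  have : (conjExp p).toReal = p.toReal / (p.toReal - 1) := by
    rw [conjExp_of_lt h1 h2, ENNReal.toReal_div, ENNReal.toReal_sub_of_le h1.le h2,
      ENNReal.toReal_one]
  rw [this]
  exact Real.HolderConjugate.conjExponent hp1

/-- superadditivity of rpow: finite sums. -/
lemma finset_rpow_sum_le {r : ℝ} (hr0 : 0 < r) (hr1 : r ≤ 1) (s : Finset ι) (a : ι → ℝ≥0∞) :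
    (∑ i ∈ s, a i) ^ r ≤ ∑ i ∈ s, a i ^ r := by
  classical
  induction s using Finset.induction with
  | empty => simp [ENNReal.zero_rpow_of_pos hr0]
  | insert j t hi ih =>
    rw [Finset.sum_insert hi, Finset.sum_insert hi]
    calc (a j + ∑ i ∈ t, a i) ^ r ≤ a j ^ r + (∑ i ∈ t, a i) ^ r :=
          ENNReal.rpow_add_le_add_rpow _ _ hr0.le hr1
      _ ≤ _ := add_le_add_right ih _

/-- ℓ^p ⊆ ℓ^1 for p ≤ 1 : ∑ a ≤ eN p a. -/
lemma tsum_le_eN {p : ℝ≥0∞} (hp : 0 < p) (hp1 : p ≤ 1) (a : ι → ℝ≥0∞) :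
    ∑' i, a i ≤ eN p a := by
  have hp' : p ≠ ∞ := by rintro rfl; exact absurd hp1 (by simp)
  have hr := toReal_pos hp hp'
  have hr1 : p.toReal ≤ 1 := by
    rw [← ENNReal.toReal_one]; exact ENNReal.toReal_mono (by simp) hp1
  rw [eN_ne_top hp', ENNReal.tsum_eq_iSup_sum]
  refine iSup_le fun s => ?_
  calc ∑ i ∈ s, a i = ((∑ i ∈ s, a i) ^ p.toReal) ^ (1/p.toReal) := by
        rw [one_div, ENNReal.rpow_rpow_inv hr.ne']
    _ ≤ (∑ i ∈ s, a i ^ p.toReal) ^ (1/p.toReal) :=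
        ENNReal.rpow_le_rpow (finset_rpow_sum_le hr hr1 s a) (by positivity)
    _ ≤ _ := ENNReal.rpow_le_rpow (ENNReal.sum_le_tsum s) (by positivity)

/-- Hölder inequality for eN. -/
lemma holder {p : ℝ≥0∞} (hp : 0 < p) (a b : ι → ℝ≥0∞) :
    ∑' i, a i * b i ≤ eN p a * eN (conjExp p) b := by
  rcases le_or_gt p 1 with h1 | h1
  · rw [conjExp_of_le_one h1, eN_top]
    calc ∑' i, a i * b i ≤ ∑' i, a i * ⨆ j, b j :=
          ENNReal.tsum_le_tsum fun i => mul_le_mul_right (le_iSup b i) _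
      _ = (∑' i, a i) * ⨆ j, b j := ENNReal.tsum_mul_right
      _ ≤ _ := mul_le_mul_left (tsum_le_eN hp h1 a) _
  · by_cases h2 : p = ∞
    · subst h2
      rw [conjExp_top, eN_top, eN_ne_top (by simp)]
      simp only [ENNReal.toReal_one, ENNReal.rpow_one, one_div_one]
      calc ∑' i, a i * b i ≤ ∑' i, (⨆ j, a j) * b i :=
            ENNReal.tsum_le_tsum fun i => mul_le_mul_left (le_iSup a i) _
        _ = _ := ENNReal.tsum_mul_left
    · obtain ⟨htop, hconj⟩ := conjExp_facts h1 h2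
      rw [eN_ne_top h2, eN_ne_top htop, ENNReal.tsum_eq_iSup_sum]
      refine iSup_le fun s => ?_
      refine le_trans (ENNReal.inner_le_Lp_mul_Lq s a b hconj) (mul_le_mul' ?_ ?_) <;>
        exact ENNReal.rpow_le_rpow (ENNReal.sum_le_tsum s) (by positivity)


open Classical in
/-- Exact duality for finitely supported, finite-valued families. -/
lemma eN_sharp_exact {q : ℝ≥0∞} (hq : 0 < q) (u : ι → ℝ≥0∞)
    (hfin : (support u).Finite) (hv : ∀ i, u i ≠ ∞) :
    ∃ w : ι → ℝ≥0∞, (support w).Finite ∧ (∀ i, w i ≠ ∞) ∧ eN q w ≤ 1 ∧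
      ∑' i, w i * u i = eN (conjExp q) u := by
  by_cases hu0 : ∀ i, u i = 0
  · refine ⟨fun _ => 0, by simp, by simp, by rw [eN_zero hq]; simp, ?_⟩
    have : u = fun _ => 0 := funext hu0
    rw [this, eN_zero (conjExp_pos q)]
    simp
  push_neg at hu0
  set s : Finset ι := hfin.toFinset with hs
  have hsne : s.Nonempty := by
    obtain ⟨i, hi⟩ := hu0
    exact ⟨i, by simp [hs, hi]⟩
  rcases le_or_gt q 1 with h1 | h1
  · -- q' = ∞ : pick argmax
    obtain ⟨i0, hi0s, hmax⟩ := s.exists_max_image u hsne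
    refine ⟨fun i => if i = i0 then 1 else 0, ?_, ?_, (eN_single hq i0 1).le, ?_⟩
    · refine (Set.finite_singleton i0).subset fun i hi => ?_
      simp only [mem_support, ne_eq, ite_eq_right_iff, not_forall] at hi
      simp [hi.1]
    · intro i; by_cases h : i = i0 <;> simp [h]
    · have h1' : ∀ i, (if i = i0 then (1:ℝ≥0∞) else 0) * u i = if i = i0 then u i0 else 0 := by
        intro i; split_ifs with h <;> simp [h]
      rw [funext h1', tsum_ite_eq, conjExp_of_le_one h1, eN_top]
      refine le_antisymm (le_iSup u i0) (iSup_le fun i => ?_)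
      by_cases hi : i ∈ s
      · exact hmax i hi
      · have : u i = 0 := by simpa [hs] using hi
        simp [this]
  · by_cases h2 : q = ∞
    · -- q' = 1 : indicator of support
      subst h2
      refine ⟨fun i => if i ∈ s then 1 else 0, ?_, ?_, ?_, ?_⟩
      · refine (s.finite_toSet).subset fun i hi => ?_
        simp only [mem_support, ne_eq, ite_eq_right_iff, not_forall] at hi
        simpa using hi.1
      · intro i; by_cases h : i ∈ s <;> simp [h]
      · rw [eN_top]; exact iSup_le fun i => by by_cases h : i ∈ s <;> simp [h]
      · have h1' : ∀ i, (if i ∈ s then (1:ℝ≥0∞) else 0) * u i = u i := by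
          intro i; split_ifs with h
          · simp
          · have : u i = 0 := by simpa [hs] using h
            simp [this]
        rw [funext h1', conjExp_top, eN_ne_top (by simp)]
        simp
    · -- 1 < q < ∞
      obtain ⟨htop, hconj⟩ := conjExp_facts h1 h2
      set q' := conjExp q with hq'
      have hr := toReal_pos hq h2
      have hr' : 0 < q'.toReal := toReal_pos (conjExp_pos q) htop
      set B := eN q' u with hB
      have hBne : B ≠ 0 := by
        obtain ⟨i, hi⟩ := hu0
        intro h0
        exact hi (eN_eq_zero (conjExp_pos q) h0 i)
      have hBtop : B ≠ ∞ := (eN_lt_top (conjExp_pos q) hfin hv).ne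
      have hq'1 : 1 < q'.toReal := hconj.symm.lt
      have hrel : (q'.toReal - 1) * q.toReal = q'.toReal := by
        have h := hconj.inv_add_inv_eq_one
        field_simp at h ⊢
        nlinarith [h]
      have hden0 : B ^ (q'.toReal - 1) ≠ 0 := by
        simp [ENNReal.rpow_eq_zero_iff, hBne, hBtop]
      have hdent : B ^ (q'.toReal - 1) ≠ ∞ :=
        (ENNReal.rpow_lt_top_of_nonneg (by linarith) hBtop).ne
      have hsum : ∑' i, u i ^ q'.toReal = B ^ q'.toReal := by
        rw [hB, eN_ne_top htop, ← ENNReal.rpow_mul, one_div, inv_mul_cancel₀ hr'.ne',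
          ENNReal.rpow_one]
      refine ⟨fun i => u i ^ (q'.toReal - 1) / B ^ (q'.toReal - 1), ?_, ?_, ?_, ?_⟩
      · refine hfin.subset fun i hi => ?_
        simp only [mem_support] at hi ⊢
        intro h0
        apply hi
        simp [h0, ENNReal.zero_rpow_of_pos (by linarith : 0 < q'.toReal - 1)]
      · intro i
        have hnum : u i ^ (q'.toReal - 1) ≠ ∞ :=
          (ENNReal.rpow_lt_top_of_nonneg (by linarith) (hv i)).ne
        exact (ENNReal.div_lt_top hnum hden0).ne
      · rw [eN_ne_top h2]
        have hterm : ∀ i, (u i ^ (q'.toReal - 1) / B ^ (q'.toReal - 1)) ^ q.toReal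
            = u i ^ q'.toReal * (B ^ q'.toReal)⁻¹ := by
          intro i
          rw [div_eq_mul_inv, ENNReal.mul_rpow_of_nonneg _ _ hr.le, ← ENNReal.rpow_mul,
            ← ENNReal.inv_rpow, ← ENNReal.rpow_mul, hrel, ENNReal.inv_rpow]
        simp_rw [hterm]
        rw [ENNReal.tsum_mul_right, hsum, ENNReal.mul_inv_cancel
          (by simp [ENNReal.rpow_eq_zero_iff, hBne, hBtop])
          ((ENNReal.rpow_lt_top_of_nonneg hr'.le hBtop).ne), ENNReal.one_rpow]
      · have hterm : ∀ i, (u i ^ (q'.toReal - 1) / B ^ (q'.toReal - 1)) * u i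
            = u i ^ q'.toReal * (B ^ (q'.toReal - 1))⁻¹ := by
          intro i
          rw [div_eq_mul_inv, mul_right_comm]
          congr 1
          have h := ENNReal.rpow_add_of_nonneg (x := u i) (q'.toReal - 1) 1 (by linarith) zero_le_one
          rw [sub_add_cancel, ENNReal.rpow_one] at h
          rw [h]
        simp_rw [hterm]
        have hBB : B ^ q'.toReal = B ^ (q'.toReal - 1) * B := by
          have h := ENNReal.rpow_add_of_nonneg (x := B) (q'.toReal - 1) 1 (by linarith) zero_le_one
          rwa [sub_add_cancel, ENNReal.rpow_one] at h
        rw [ENNReal.tsum_mul_right, hsum, hBB, mul_right_comm,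
          ENNReal.mul_inv_cancel hden0 hdent, one_mul]


open Classical in
/-- Finite approximation from below of the eN norm. -/
lemma eN_finApprox {s : ℝ≥0∞} (hs : 0 < s) (b : ι → ℝ≥0∞) {c : ℝ≥0∞} (hc : c < eN s b) :
    ∃ b' : ι → ℝ≥0∞, (∀ i, b' i ≤ b i) ∧ (support b').Finite ∧ (∀ i, b' i ≠ ∞) ∧
      c < eN s b' := by
  have hctop : c ≠ ∞ := hc.ne_top
  by_cases hs' : s = ∞
  · subst hs'
    rw [eN_top] at hc
    obtain ⟨i, hi⟩ := lt_iSup_iff.mp hc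
    refine ⟨fun j => if j = i then min (b i) (c + 1) else 0, ?_, ?_, ?_, ?_⟩
    · intro j; beta_reduce; split_ifs with h
      · subst h; exact min_le_left _ _
      · exact zero_le
    · exact (Set.finite_singleton i).subset fun j hj => by
        simp only [mem_support, ne_eq, ite_eq_right_iff, not_forall] at hj
        simp [hj.1]
    · intro j; beta_reduce; split_ifs with h
      · exact (lt_of_le_of_lt (min_le_right _ _) (by
          simpa [lt_top_iff_ne_top] using ENNReal.add_lt_top.mpr
            ⟨hctop.lt_top, ENNReal.one_lt_top⟩)).ne
      · simp
    · rw [eN_single (by simp : (0:ℝ≥0∞) < ∞) i]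
      exact lt_min hi (ENNReal.lt_add_right hctop one_ne_zero)
  · have hr := toReal_pos hs hs'
    rw [eN_ne_top hs'] at hc
    have hcr : c ^ s.toReal < ∑' i, b i ^ s.toReal := by
      calc c ^ s.toReal = (c ^ s.toReal) := rfl
        _ < _ := by
            have := ENNReal.rpow_lt_rpow hc hr
            rwa [← ENNReal.rpow_mul, one_div, inv_mul_cancel₀ hr.ne', ENNReal.rpow_one] at this
    rw [ENNReal.tsum_eq_iSup_sum] at hcr
    obtain ⟨t, ht⟩ := lt_iSup_iff.mp hcr
    by_cases hbt : ∀ i ∈ t, b i ≠ ∞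
    · refine ⟨fun i => if i ∈ t then b i else 0, ?_, ?_, ?_, ?_⟩
      · intro i; beta_reduce; split_ifs <;> simp
      · exact (t.finite_toSet).subset fun i hi => by
          simp only [mem_support, ne_eq, ite_eq_right_iff, not_forall] at hi
          simpa using hi.1
      · intro i; beta_reduce; split_ifs with h
        · exact hbt i h
        · simp
      · rw [eN_ne_top hs']
        have : ∀ i, (if i ∈ t then b i else 0) ^ s.toReal
            = if i ∈ t then b i ^ s.toReal else 0 := by
          intro i; beta_reduce; split_ifs <;> simp [ENNReal.zero_rpow_of_pos hr]
        simp_rw [this]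
        rw [tsum_eq_sum (s := t) (fun i hi => by simp [hi]),
          Finset.sum_congr rfl (fun i (hi : i ∈ t) => if_pos hi)]
        calc c = (c ^ s.toReal) ^ (1 / s.toReal) := by
              rw [one_div, ENNReal.rpow_rpow_inv hr.ne']
          _ < _ := ENNReal.rpow_lt_rpow ht (by positivity)
    · push_neg at hbt
      obtain ⟨i, _, hbi⟩ := hbt
      refine ⟨fun j => if j = i then c + 1 else 0, ?_, ?_, ?_, ?_⟩
      · intro j; beta_reduce; split_ifs with h
        · subst h; rw [hbi]; exact le_top
        · exact zero_le
      · exact (Set.finite_singleton i).subset fun j hj => by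
          simp only [mem_support, ne_eq, ite_eq_right_iff, not_forall] at hj
          simp [hj.1]
      · intro j; beta_reduce; split_ifs with h
        · exact (ENNReal.add_lt_top.mpr ⟨hctop.lt_top, ENNReal.one_lt_top⟩).ne
        · simp
      · rw [eN_single hs i]
        exact ENNReal.lt_add_right hctop one_ne_zero

/-- Approximate sharpness: the dual pairing reaches the conjugate norm. -/
lemma eN_sharp {p : ℝ≥0∞} (hp : 0 < p) (b : ι → ℝ≥0∞) {c : ℝ≥0∞}
    (hc : c < eN (conjExp p) b) :
    ∃ a : ι → ℝ≥0∞, (support a).Finite ∧ (∀ i, a i ≠ ∞) ∧ eN p a ≤ 1 ∧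
      c < ∑' i, a i * b i := by
  obtain ⟨b', hb'le, hb'fin, hb'v, hb'c⟩ := eN_finApprox (conjExp_pos p) b hc
  obtain ⟨w, hwfin, hwv, hwle, hwsum⟩ := eN_sharp_exact hp b' hb'fin hb'v
  refine ⟨w, hwfin, hwv, hwle, lt_of_lt_of_le (hwsum ▸ hb'c) ?_⟩
  exact ENNReal.tsum_le_tsum fun i => mul_le_mul_right (hb'le i) _


lemma eN_congr {p : ℝ≥0∞} {a b : ι → ℝ≥0∞} (h : ∀ i, a i = b i) : eN p a = eN p b := by
  rw [funext h]

variable {J K : Type*}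

lemma tsum_prod_swap (F : J × K → ℝ≥0∞) : ∑' x, F x = ∑' k, ∑' j, F (j, k) := by
  rw [ENNReal.tsum_prod']
  exact ENNReal.tsum_comm

/-- Mixed norm on ℝ≥0∞-valued families. -/
noncomputable def eNN (p q : ℝ≥0∞) (a : J × K → ℝ≥0∞) : ℝ≥0∞ :=
  eN q (fun k => eN p (fun j => a (j, k)))

lemma eNN_lt_top {p q : ℝ≥0∞} (hp : 0 < p) (hq : 0 < q) {a : J × K → ℝ≥0∞}
    (hfin : (support a).Finite) (hv : ∀ x, a x ≠ ∞) : eNN p q a < ∞ := by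
  have hcol : ∀ k, (support fun j => a (j, k)).Finite := by
    intro k
    have : (support fun j => a (j, k)) ⊆ (fun j => (j, k)) ⁻¹' (support a) := fun j hj => hj
    exact Set.Finite.subset (Set.Finite.preimage (Set.injOn_of_injective
      (fun j j' h => (Prod.mk.injEq _ _ _ _).mp h |>.1)) hfin) this
  refine eN_lt_top hq ?_ (fun k => (eN_lt_top hp (hcol k) (fun j => hv _)).ne)
  have : (support fun k => eN p (fun j => a (j, k))) ⊆ Prod.snd '' (support a) := by
    intro k hk
    simp only [mem_support] at hk
    by_contra hkim
    have hz : ∀ j, a (j, k) = 0 := by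
      intro j
      by_contra hja
      exact hkim ⟨(j, k), hja, rfl⟩
    rw [eN_congr (b := fun _ => (0:ℝ≥0∞)) hz, eN_zero hp] at hk
    exact hk rfl
  exact Set.Finite.subset (hfin.image _) this

lemma eNN_holder {p q : ℝ≥0∞} (hp : 0 < p) (hq : 0 < q) (a b : J × K → ℝ≥0∞) :
    ∑' x : J × K, a x * b x ≤ eNN p q a * eNN (conjExp p) (conjExp q) b := by
  calc ∑' x : J × K, a x * b x = ∑' k, ∑' j, a (j, k) * b (j, k) := tsum_prod_swap _
    _ ≤ ∑' k, eN p (fun j => a (j, k)) * eN (conjExp p) (fun j => b (j, k)) :=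
        ENNReal.tsum_le_tsum fun k => holder hp _ _
    _ ≤ _ := holder hq _ _

open Classical in
/-- Mixed sharpness. -/
lemma eNN_sharp {p q : ℝ≥0∞} (hp : 0 < p) (hq : 0 < q) (b : J × K → ℝ≥0∞) {c : ℝ≥0∞}
    (hc : c < eNN (conjExp p) (conjExp q) b) :
    ∃ a : J × K → ℝ≥0∞, (support a).Finite ∧ (∀ x, a x ≠ ∞) ∧ eNN p q a ≤ 1 ∧
      c < ∑' x : J × K, a x * b x := by
  set B : K → ℝ≥0∞ := fun k => eN (conjExp p) (fun j => b (j, k)) with hBdef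
  by_cases hBtop : ∃ k0, B k0 = ∞
  · -- some column has infinite conjugate norm
    obtain ⟨k0, hk0⟩ := hBtop
    have hcB : c < B k0 := by rw [hk0]; exact hc.ne_top.lt_top
    obtain ⟨a0, ha0fin, ha0v, ha0le, ha0sum⟩ := eN_sharp hp (fun j => b (j, k0)) hcB
    refine ⟨fun x => if x.2 = k0 then a0 x.1 else 0, ?_, ?_, ?_, ?_⟩
    · refine (ha0fin.image (fun j => (j, k0))).subset fun x hx => ?_
      simp only [mem_support, ne_eq, ite_eq_right_iff, not_forall] at hx
      obtain ⟨hx2, hx1⟩ := hx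
      exact ⟨x.1, hx1, by rw [← hx2]⟩
    · intro x; beta_reduce; split_ifs with h
      · exact ha0v _
      · simp
    · have hcols : ∀ k, eN p (fun j : J => if k = k0 then a0 j else 0)
          ≤ (fun k => if k = k0 then (1:ℝ≥0∞) else 0) k := by
        intro k
        by_cases h : k = k0
        · subst h; simpa using ha0le
        · have hz : (fun j : J => if k = k0 then a0 j else 0) = fun _ : J => (0:ℝ≥0∞) :=
            funext fun j => if_neg h
          rw [hz, eN_zero hp]
          exact zero_le
      exact le_trans (eN_mono hcols) (le_of_eq (eN_single hq k0 1))
    · have key : (∑' x : J × K, (if x.2 = k0 then a0 x.1 else 0) * b x)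
          = ∑' j, a0 j * b (j, k0) := by
        refine (tsum_prod_swap _).trans ?_
        refine (tsum_congr (fun k => ?_)).trans (tsum_ite_eq k0 (fun _ => ∑' j, a0 j * b (j, k0)))
        by_cases h : k = k0
        · subst h; simp
        · simp [h]
      exact lt_of_lt_of_le ha0sum (le_of_eq key.symm)
  · -- all columns finite
    push_neg at hBtop
    obtain ⟨B', hB'le, hB'fin, hB'v, hB'c⟩ := eN_finApprox (conjExp_pos q) B hc
    set E := eN (conjExp q) B' with hE
    have hE0 : E ≠ 0 := fun h0 => by simp [h0] at hB'c
    have hEtop : E ≠ ∞ := (eN_lt_top (conjExp_pos q) hB'fin hB'v).ne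
    obtain ⟨θ, hθ1, hθ2⟩ : ∃ θ : ℝ≥0∞, θ < 1 ∧ c < θ * E := by
      have hdiv : c / E < 1 := ENNReal.div_lt_of_lt_mul (by simpa using hB'c)
      obtain ⟨θ, hθa, hθb⟩ := exists_between hdiv
      exact ⟨θ, hθb, (ENNReal.div_lt_iff (Or.inl hE0) (Or.inl hEtop)).mp hθa⟩
    have hθ0 : θ ≠ 0 := by
      rintro rfl
      simp at hθ2
    have hθtop : θ ≠ ∞ := (hθ1.trans ENNReal.one_lt_top).ne
    set u : K → ℝ≥0∞ := fun k => θ * B' k with hu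
    have hufin : (support u).Finite := hB'fin.subset fun k hk => by
      simp only [mem_support, hu] at hk ⊢
      intro h0; exact hk (by simp [h0])
    have huv : ∀ k, u k ≠ ∞ := fun k => ENNReal.mul_ne_top hθtop (hB'v k)
    obtain ⟨w, hwfin, hwv, hwle, hwsum⟩ := eN_sharp_exact hq u hufin huv
    have hwu : ∑' k, w k * u k = θ * E := by
      rw [hwsum, hE]
      exact eN_smul (conjExp_pos q) θ B'
    have Hin : ∀ k : K, ∃ ak : J → ℝ≥0∞, (support ak).Finite ∧ (∀ j, ak j ≠ ∞) ∧
        eN p ak ≤ 1 ∧ (u k ≠ 0 → u k < ∑' j, ak j * b (j, k)) := by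
      intro k
      by_cases hk : u k ≠ 0
      · have huk : u k < B k := by
          have hB'k0 : B' k ≠ 0 := by
            intro h0; exact hk (by simp [hu, h0])
          calc u k = θ * B' k := rfl
            _ < 1 * B' k := by
                rw [ENNReal.mul_lt_mul_iff_left hB'k0 (hB'v k)]; exact hθ1
            _ = B' k := one_mul _
            _ ≤ B k := hB'le k
        obtain ⟨ak, h1, h2, h3, h4⟩ := eN_sharp hp (fun j => b (j, k)) huk
        exact ⟨ak, h1, h2, h3, fun _ => h4⟩
      · exact ⟨fun _ => 0, by simp, by simp, by rw [eN_zero hp]; simp,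
          fun h => absurd h hk⟩
    choose A hA1 hA2 hA3 hA4 using Hin
    refine ⟨fun x => w x.2 * A x.2 x.1, ?_, ?_, ?_, ?_⟩
    · have hsub : (support fun x : J × K => w x.2 * A x.2 x.1) ⊆
          ⋃ k ∈ support w, (support (A k)) ×ˢ ({k} : Set K) := by
        intro x hx
        simp only [mem_support] at hx
        have hw : w x.2 ≠ 0 := fun h => hx (by simp [h])
        have ha : A x.2 x.1 ≠ 0 := fun h => hx (by simp [h])
        exact Set.mem_biUnion hw ⟨ha, rfl⟩
      exact Set.Finite.subset (Set.Finite.biUnion hwfin fun k _ => (hA1 k).prod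
        (Set.finite_singleton k)) hsub
    · intro x; exact ENNReal.mul_ne_top (hwv _) (hA2 _ _)
    · have hcols : ∀ k, eN p (fun j => w k * A k j) ≤ w k := by
        intro k
        calc eN p (fun j => w k * A k j) = w k * eN p (A k) := eN_smul hp _ _
          _ ≤ w k * 1 := mul_le_mul_right (hA3 k) _
          _ = w k := mul_one _
      exact le_trans (eN_mono hcols) hwle
    · have hterm : ∀ k, w k * u k ≤ ∑' j, w k * A k j * b (j, k) := by
        intro k
        have hmul : ∑' j, w k * A k j * b (j, k) = w k * ∑' j, A k j * b (j, k) := by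
          simp_rw [mul_assoc]
          exact ENNReal.tsum_mul_left
        rw [hmul]
        by_cases hk : u k = 0
        · simp [hk]
        · exact mul_le_mul_right (hA4 k hk).le _
      calc c < θ * E := hθ2
        _ = ∑' k, w k * u k := hwu.symm
        _ ≤ ∑' k, ∑' j, w k * A k j * b (j, k) := ENNReal.tsum_le_tsum hterm
        _ = ∑' x : J × K, w x.2 * A x.2 x.1 * b x :=
            (tsum_prod_swap (fun x : J × K => w x.2 * A x.2 x.1 * b x)).symm


-- Complex layer
lemma ellp_eq {p : ℝ≥0∞} (f : ι → ℂ) : ellpNorm p f = eN p (fun i => (‖f i‖₊ : ℝ≥0∞)) := rfl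

lemma ellpq_eq {p q : ℝ≥0∞} (f : J × K → ℂ) :
    ellpqNorm p q f = eNN p q (fun x => (‖f x‖₊ : ℝ≥0∞)) := rfl

lemma support_nnnorm (f : J × K → ℂ) :
    support (fun x => ((‖f x‖₊ : ℝ≥0∞))) = support f := by
  ext x; simp [mem_support]

/-- Finitely supported families are in ℓ^{p,q}_0. -/
lemma memEllpq0_of_finite {p q : ℝ≥0∞} (hp : 0 < p) (hq : 0 < q) {f : J × K → ℂ}
    (hfin : (support f).Finite) : memEllpq0 p q f := by
  constructor
  · rw [ellpq_eq]
    exact eNN_lt_top hp hq (by rw [support_nnnorm]; exact hfin) (fun x => by simp)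
  · intro ε hε
    refine ⟨f, hfin, ?_⟩
    have : f - f = 0 := by simp
    rw [this]
    have hz : ellpqNorm p q (0 : J × K → ℂ) = 0 := by
      rw [ellpq_eq, eNN]
      rw [eN_congr (b := fun _ : K => (0:ℝ≥0∞)) (fun k => by
        rw [eN_congr (b := fun _ : J => (0:ℝ≥0∞)) (fun j => by simp), eN_zero hp]), eN_zero hq]
    rw [hz]
    exact ENNReal.ofReal_pos.mpr hε

/-- Hölder for complex pairings. -/
lemma pairing_abs_le {p q : ℝ≥0∞} (hp : 0 < p) (hq : 0 < q) (f μ : J × K → ℂ) :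
    ∑' x : J × K, ((‖f x * μ x‖₊ : ℝ≥0∞)) ≤
      ellpqNorm p q f * ellpqNorm (conjExp p) (conjExp q) μ := by
  rw [ellpq_eq, ellpq_eq]
  calc ∑' x : J × K, ((‖f x * μ x‖₊ : ℝ≥0∞))
      = ∑' x : J × K, ((‖f x‖₊ : ℝ≥0∞)) * ((‖μ x‖₊ : ℝ≥0∞)) := by
        apply tsum_congr; intro x
        rw [nnnorm_mul, ENNReal.coe_mul]
    _ ≤ _ := eNN_holder hp hq _ _

lemma pairing_summable {p q : ℝ≥0∞} (hp : 0 < p) (hq : 0 < q) {f μ : J × K → ℂ}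
    (hf : ellpqNorm p q f < ⊤) (hμ : ellpqNorm (conjExp p) (conjExp q) μ < ⊤) :
    Summable (fun x : J × K => f x * μ x) := by
  have h := pairing_abs_le hp hq f μ
  have hlt : ∑' x : J × K, ((‖f x * μ x‖₊ : ℝ≥0∞)) < ⊤ :=
    lt_of_le_of_lt h (ENNReal.mul_lt_top hf hμ)
  exact Summable.of_nnnorm (ENNReal.tsum_coe_ne_top_iff_summable.mp hlt.ne)

lemma pairing_norm_le {p q : ℝ≥0∞} (hp : 0 < p) (hq : 0 < q) {f μ : J × K → ℂ}
    (hf : ellpqNorm p q f < ⊤) (hμ : ellpqNorm (conjExp p) (conjExp q) μ < ⊤) :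
    ENNReal.ofReal ‖∑' x : J × K, f x * μ x‖ ≤
      ellpqNorm p q f * ellpqNorm (conjExp p) (conjExp q) μ := by
  have hsum : Summable (fun x : J × K => ((‖f x * μ x‖₊ : ℝ≥0)))  := by
    have hlt : ∑' x : J × K, ((‖f x * μ x‖₊ : ℝ≥0∞)) < ⊤ :=
      lt_of_le_of_lt (pairing_abs_le hp hq f μ) (ENNReal.mul_lt_top hf hμ)
    exact ENNReal.tsum_coe_ne_top_iff_summable.mp hlt.ne
  calc ENNReal.ofReal ‖∑' x : J × K, f x * μ x‖
      = ((‖∑' x : J × K, f x * μ x‖₊ : ℝ≥0∞)) := ofReal_norm _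
    _ ≤ ((∑' x : J × K, ‖f x * μ x‖₊ : ℝ≥0) : ℝ≥0∞) := by
        exact_mod_cast ENNReal.coe_le_coe.mpr (nnnorm_tsum_le hsum)
    _ = ∑' x : J × K, ((‖f x * μ x‖₊ : ℝ≥0∞)) := ENNReal.coe_tsum hsum
    _ ≤ _ := pairing_abs_le hp hq f μ


open Classical in
/-- Build a complex extremizer from nonnegative weights. -/
lemma extremizer {p q : ℝ≥0∞} (μ : J × K → ℂ)
    {a : J × K → ℝ≥0∞} (hfin : (support a).Finite) (hv : ∀ x, a x ≠ ∞) :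
    ∃ f : J × K → ℂ, (support f).Finite ∧
      ellpqNorm p q f = eNN p q a ∧
      ENNReal.ofReal ‖∑' x : J × K, f x * μ x‖ = ∑' x : J × K, a x * ((‖μ x‖₊ : ℝ≥0∞)) := by
  set f : J × K → ℂ := fun x =>
    ((a x).toReal : ℂ) * (if μ x = 0 then 1 else (starRingEnd ℂ) (μ x) / ‖μ x‖) with hf
  have hnorm : ∀ x, ‖f x‖ = (a x).toReal := by
    intro x
    rw [hf]
    beta_reduce
    by_cases h : μ x = 0
    · simp [h, abs_of_nonneg ENNReal.toReal_nonneg]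
    · have h1 : ‖(starRingEnd ℂ) (μ x) / (‖μ x‖ : ℂ)‖ = 1 := by
        rw [norm_div, RCLike.norm_conj, Complex.norm_real, Real.norm_eq_abs,
          abs_of_nonneg (norm_nonneg _)]
        exact div_self (norm_ne_zero_iff.mpr h)
      rw [if_neg h, norm_mul, h1, mul_one, Complex.norm_real, Real.norm_eq_abs]
      exact abs_of_nonneg ENNReal.toReal_nonneg
  have hnn : ∀ x, ((‖f x‖₊ : ℝ≥0∞)) = a x := by
    intro x
    rw [show ((‖f x‖₊ : ℝ≥0∞)) = ENNReal.ofReal ‖f x‖ from (ofReal_norm _).symm, hnorm x, ENNReal.ofReal_toReal (hv x)]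
  have hsupp : support f ⊆ support a := by
    intro x hx
    simp only [mem_support] at hx ⊢
    intro h0
    exact hx (by rw [hf]; simp [h0])
  have hmul : ∀ x, f x * μ x = (((a x).toReal * ‖μ x‖ : ℝ) : ℂ) := by
    intro x
    rw [hf]
    beta_reduce
    by_cases h : μ x = 0
    · simp [h]
    · have hnz : ((‖μ x‖ : ℝ) : ℂ) ≠ 0 := by
        simpa using norm_ne_zero_iff.mpr h
      have key : (starRingEnd ℂ) (μ x) / ((‖μ x‖ : ℝ) : ℂ) * μ x = ((‖μ x‖ : ℝ) : ℂ) := by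
        rw [div_mul_eq_mul_div, mul_comm, Complex.mul_conj, div_eq_iff hnz]
        rw [Complex.normSq_eq_norm_sq]
        push_cast
        ring
      rw [if_neg h, mul_assoc, key]
      push_cast
      ring
  refine ⟨f, hfin.subset hsupp, ?_, ?_⟩
  · rw [ellpq_eq]
    congr 1
    exact funext hnn
  · set s := hfin.toFinset with hs
    have hout : ∀ x : J × K, x ∉ s → f x * μ x = 0 := by
      intro x hx
      have : a x = 0 := by simpa [hs] using hx
      rw [hmul x, this]
      simp
    have hout2 : ∀ x : J × K, x ∉ s → a x * ((‖μ x‖₊ : ℝ≥0∞)) = 0 := by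
      intro x hx
      have : a x = 0 := by simpa [hs] using hx
      rw [this, zero_mul]
    rw [tsum_eq_sum hout, tsum_eq_sum hout2]
    have hsum : ∑ x ∈ s, f x * μ x = ((∑ x ∈ s, (a x).toReal * ‖μ x‖ : ℝ) : ℂ) := by
      rw [Complex.ofReal_sum]
      exact Finset.sum_congr rfl fun x _ => hmul x
    rw [hsum]
    have hnonneg : (0:ℝ) ≤ ∑ x ∈ s, (a x).toReal * ‖μ x‖ :=
      Finset.sum_nonneg fun x _ => mul_nonneg ENNReal.toReal_nonneg (norm_nonneg _)
    rw [Complex.norm_real, Real.norm_eq_abs, abs_of_nonneg hnonneg]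
    rw [ENNReal.ofReal_sum_of_nonneg fun x _ => mul_nonneg ENNReal.toReal_nonneg (norm_nonneg _)]
    refine Finset.sum_congr rfl fun x _ => ?_
    rw [ENNReal.ofReal_mul ENNReal.toReal_nonneg, ENNReal.ofReal_toReal (hv x),
      show ENNReal.ofReal ‖μ x‖ = ((‖μ x‖₊ : ℝ≥0∞)) from ofReal_norm _]

/-- Part 1: the dual pairing supremum equals the conjugate mixed norm. -/
lemma sup_pairing {p q : ℝ≥0∞} (hp : 0 < p) (hq : 0 < q) (μ : J × K → ℂ)
    (hμ : ellpqNorm (conjExp p) (conjExp q) μ < ⊤) :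
    (⨆ (f : J × K → ℂ) (_ : memEllpq0 p q f ∧ ellpqNorm p q f ≤ 1),
        ENNReal.ofReal ‖∑' x : J × K, f x * μ x‖)
      = ellpqNorm (conjExp p) (conjExp q) μ := by
  refine le_antisymm ?_ ?_
  · refine iSup_le fun f => iSup_le fun hPf => ?_
    calc ENNReal.ofReal ‖∑' x : J × K, f x * μ x‖
        ≤ ellpqNorm p q f * ellpqNorm (conjExp p) (conjExp q) μ :=
          pairing_norm_le hp hq hPf.1.1 hμ
      _ ≤ 1 * ellpqNorm (conjExp p) (conjExp q) μ := mul_le_mul_left hPf.2 _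
      _ = _ := one_mul _
  · refine le_of_forall_lt fun c hc => ?_
    rw [ellpq_eq] at hc
    obtain ⟨a, hafin, hav, hale, hasum⟩ := eNN_sharp hp hq (fun x => ((‖μ x‖₊ : ℝ≥0∞))) hc
    obtain ⟨f, hffin, hfnorm, hfsum⟩ := extremizer (p := p) (q := q) μ hafin hav
    have hmem : memEllpq0 p q f ∧ ellpqNorm p q f ≤ 1 :=
      ⟨memEllpq0_of_finite hp hq hffin, hfnorm ▸ hale⟩
    calc c < ∑' x : J × K, a x * ((‖μ x‖₊ : ℝ≥0∞)) := hasum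
      _ = ENNReal.ofReal ‖∑' x : J × K, f x * μ x‖ := hfsum.symm
      _ ≤ _ := le_iSup₂ (f := fun (f : J × K → ℂ)
          (_ : memEllpq0 p q f ∧ ellpqNorm p q f ≤ 1) =>
          ENNReal.ofReal ‖∑' x : J × K, f x * μ x‖) f hmem


open Classical in
lemma single_fin (x0 : J × K) :
    (support fun y : J × K => if y = x0 then (1:ℂ) else 0).Finite :=
  (Set.finite_singleton x0).subset fun y hy => by
    simp only [mem_support, ne_eq, ite_eq_right_iff, not_forall] at hy
    simp [hy.1]

section Functional

variable {p q : ℝ≥0∞} (hp : 0 < p) (hq : 0 < q) (L : (J × K → ℂ) → ℂ)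
  (hadd : ∀ f g : J × K → ℂ, memEllpq0 p q f → memEllpq0 p q g →
    L (f + g) = L f + L g)
  (hsmul : ∀ (c : ℂ) (f : J × K → ℂ), memEllpq0 p q f → L (c • f) = c * L f)

include hp hq hsmul in
lemma L_zero : L 0 = 0 := by
  have h0 : memEllpq0 p q (0 : J × K → ℂ) :=
    memEllpq0_of_finite hp hq (by simp)
  have := hsmul 0 0 h0
  rwa [zero_smul, zero_mul] at this

include hp hq hadd hsmul in
open Classical in
lemma L_sum_rep (s : Finset (J × K)) :
    ∀ g : J × K → ℂ, support g ⊆ ↑s →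
      L g = ∑ x ∈ s, g x * L (fun y => if y = x then 1 else 0) := by
  classical
  induction s using Finset.induction with
  | empty =>
    intro g hg
    have : g = 0 := by
      funext y
      by_contra hy
      exact absurd (hg hy) (by simp)
    rw [this, L_zero hp hq L hsmul, Finset.sum_empty]
  | insert x0 s hx0 ih =>
    intro g hg
    set g' := Function.update g x0 0 with hg'
    have hsupp' : support g' ⊆ ↑s := by
      intro y hy
      simp only [mem_support, hg'] at hy
      by_cases h : y = x0
      · subst h; simp [Function.update_self] at hy
      · rw [Function.update_of_ne h] at hy
        have := hg hy
        simp only [Finset.coe_insert, Set.mem_insert_iff] at this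
        rcases this with h' | h'
        · exact absurd h' h
        · exact h'
    have hdecomp : g = g' + g x0 • (fun y => if y = x0 then (1:ℂ) else 0) := by
      funext y
      by_cases h : y = x0
      · subst h
        simp [hg', Function.update_self]
      · simp [hg', Function.update_of_ne h, h]
    have hmem1 : memEllpq0 p q g' :=
      memEllpq0_of_finite hp hq ((s.finite_toSet).subset hsupp')
    have hmem2 : memEllpq0 p q (g x0 • (fun y => if y = x0 then (1:ℂ) else 0)) :=
      memEllpq0_of_finite hp hq ((single_fin x0).subset (support_smul_subset_right _ _))
    rw [hdecomp, hadd _ _ hmem1 hmem2, hsmul _ _ (memEllpq0_of_finite hp hq (single_fin x0)),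
      ih g' hsupp', Finset.sum_insert hx0]
    have hval : ∀ x ∈ s, g' x * L (fun y => if y = x then 1 else 0)
        = (g' + g x0 • fun y => if y = x0 then (1:ℂ) else 0) x
          * L (fun y => if y = x then 1 else 0) := by
      intro x hxs
      have hne : x ≠ x0 := fun h => hx0 (h ▸ hxs)
      congr 1
      simp [hg', hne, Function.update_of_ne hne]
    rw [Finset.sum_congr rfl hval]
    have hx0val : (g' + g x0 • fun y => if y = x0 then (1:ℂ) else 0) x0 = g x0 := by
      simp [hg', Function.update_self]
    rw [add_comm (∑ x ∈ s, _) _]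
    congr 1
    rw [hx0val]

include hp hq hadd hsmul in
open Classical in
lemma L_finrep {g : J × K → ℂ} (hgfin : (support g).Finite) :
    L g = ∑' x : J × K, g x * L (fun y => if y = x then 1 else 0) := by
  rw [tsum_eq_sum (s := hgfin.toFinset) (fun x hx => by
    have : g x = 0 := by simpa using hx
    rw [this, zero_mul])]
  exact L_sum_rep hp hq L hadd hsmul hgfin.toFinset g (fun y hy => by simpa using hy)

end Functional


section Functional2

variable {p q : ℝ≥0∞} (hp : 0 < p) (hq : 0 < q) (L : (J × K → ℂ) → ℂ)
  (hadd : ∀ f g : J × K → ℂ, memEllpq0 p q f → memEllpq0 p q g →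
    L (f + g) = L f + L g)
  (hsmul : ∀ (c : ℂ) (f : J × K → ℂ), memEllpq0 p q f → L (c • f) = c * L f)
  {Cb : ℝ} (hCb0 : 0 ≤ Cb)
  (hCb : ∀ f : J × K → ℂ, memEllpq0 p q f → ‖L f‖ ≤ Cb * (ellpqNorm p q f).toReal)

include hp hq hadd hsmul hCb0 hCb in
open Classical in
lemma mu_norm_le :
    ellpqNorm (conjExp p) (conjExp q) (fun x : J × K => L (fun y => if y = x then 1 else 0))
      ≤ ENNReal.ofReal Cb := by
  set μ : J × K → ℂ := fun x => L (fun y => if y = x then 1 else 0) with hμ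
  refine le_of_forall_lt fun c hc => ?_
  rw [ellpq_eq] at hc
  obtain ⟨a, hafin, hav, hale, hasum⟩ := eNN_sharp hp hq (fun x => ((‖μ x‖₊ : ℝ≥0∞))) hc
  obtain ⟨f, hffin, hfnorm, hfsum⟩ := extremizer (p := p) (q := q) μ hafin hav
  have hfrep : L f = ∑' x : J × K, f x * μ x := L_finrep hp hq L hadd hsmul hffin
  have hmemf : memEllpq0 p q f := memEllpq0_of_finite hp hq hffin
  have hle1 : ellpqNorm p q f ≤ 1 := hfnorm ▸ hale
  calc c < ∑' x : J × K, a x * ((‖μ x‖₊ : ℝ≥0∞)) := hasum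
    _ = ENNReal.ofReal ‖∑' x : J × K, f x * μ x‖ := hfsum.symm
    _ = ENNReal.ofReal ‖L f‖ := by rw [hfrep]
    _ ≤ ENNReal.ofReal (Cb * (ellpqNorm p q f).toReal) :=
        ENNReal.ofReal_le_ofReal (hCb f hmemf)
    _ ≤ ENNReal.ofReal (Cb * 1) := by
        refine ENNReal.ofReal_le_ofReal (mul_le_mul_of_nonneg_left ?_ hCb0)
        calc (ellpqNorm p q f).toReal ≤ (1 : ℝ≥0∞).toReal :=
              ENNReal.toReal_mono (by simp) hle1
          _ = 1 := by simp
    _ = ENNReal.ofReal Cb := by rw [mul_one]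

include hp hq hadd hsmul hCb0 hCb in
open Classical in
lemma L_rep {f : J × K → ℂ} (hf : memEllpq0 p q f)
    (hμlt : ellpqNorm (conjExp p) (conjExp q)
      (fun x : J × K => L (fun y => if y = x then 1 else 0)) < ⊤) :
    L f = ∑' x : J × K, f x * L (fun y => if y = x then 1 else 0) := by
  set μ : J × K → ℂ := fun x => L (fun y => if y = x then 1 else 0) with hμ
  set M : ℝ := (ellpqNorm (conjExp p) (conjExp q) μ).toReal with hM
  have hM0 : 0 ≤ M := ENNReal.toReal_nonneg
  set d : ℂ := L f - ∑' x : J × K, f x * μ x with hd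
  have hbd : ∀ ε : ℝ, 0 < ε → ‖d‖ ≤ (Cb + M) * ε := by
    intro ε hε
    obtain ⟨g, hgfin, hfg⟩ := hf.2 ε hε
    have hmemg : memEllpq0 p q g := memEllpq0_of_finite hp hq hgfin
    have hmemfg : memEllpq0 p q (f - g) := by
      refine ⟨lt_trans hfg ENNReal.ofReal_lt_top, fun ε' hε' => ?_⟩
      obtain ⟨g', hg'fin, hfg'⟩ := hf.2 ε' hε'
      refine ⟨g' - g, (hg'fin.union hgfin).subset (support_sub _ _), ?_⟩
      rw [sub_sub_sub_cancel_right]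
      exact hfg'
    have hLsplit : L f = L (f - g) + L g := by
      have h1 : (f - g) + g = f := sub_add_cancel f g
      calc L f = L ((f - g) + g) := by rw [h1]
        _ = L (f - g) + L g := hadd _ _ hmemfg hmemg
    have hgrep : L g = ∑' x : J × K, g x * μ x := L_finrep hp hq L hadd hsmul hgfin
    have hsumf : Summable fun x : J × K => f x * μ x :=
      pairing_summable hp hq hf.1 hμlt
    have hsumg : Summable fun x : J × K => g x * μ x :=
      pairing_summable hp hq hmemg.1 hμlt
    have hsumfg : Summable fun x : J × K => (f - g) x * μ x :=
      pairing_summable hp hq hmemfg.1 hμlt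
    have htsplit : ∑' x : J × K, f x * μ x
        = (∑' x : J × K, (f - g) x * μ x) + ∑' x : J × K, g x * μ x := by
      rw [← Summable.tsum_add hsumfg hsumg]
      refine tsum_congr fun x => ?_
      simp [sub_mul]
    have hdeq : d = L (f - g) - ∑' x : J × K, (f - g) x * μ x := by
      rw [hd, hLsplit, hgrep, htsplit]
      ring
    have h1 : ‖L (f - g)‖ ≤ Cb * ε := by
      calc ‖L (f - g)‖ ≤ Cb * (ellpqNorm p q (f - g)).toReal := hCb _ hmemfg
        _ ≤ Cb * ε := by
            refine mul_le_mul_of_nonneg_left ?_ hCb0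
            exact ENNReal.toReal_le_of_le_ofReal hε.le hfg.le
    have h2 : ‖∑' x : J × K, (f - g) x * μ x‖ ≤ ε * M := by
      have hofr : ENNReal.ofReal ‖∑' x : J × K, (f - g) x * μ x‖
          ≤ ENNReal.ofReal ε * ellpqNorm (conjExp p) (conjExp q) μ := by
        refine le_trans (pairing_norm_le hp hq hmemfg.1 hμlt) ?_
        exact mul_le_mul_left hfg.le _
      have hne : ENNReal.ofReal ε * ellpqNorm (conjExp p) (conjExp q) μ ≠ ⊤ :=
        ENNReal.mul_ne_top ENNReal.ofReal_ne_top hμlt.ne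
      calc ‖∑' x : J × K, (f - g) x * μ x‖
          = (ENNReal.ofReal ‖∑' x : J × K, (f - g) x * μ x‖).toReal := by
            rw [ENNReal.toReal_ofReal (norm_nonneg _)]
        _ ≤ (ENNReal.ofReal ε * ellpqNorm (conjExp p) (conjExp q) μ).toReal :=
            ENNReal.toReal_mono hne hofr
        _ = ε * M := by
            rw [ENNReal.toReal_mul, ENNReal.toReal_ofReal hε.le]
    calc ‖d‖ = ‖L (f - g) - ∑' x : J × K, (f - g) x * μ x‖ := by rw [hdeq]
      _ ≤ ‖L (f - g)‖ + ‖∑' x : J × K, (f - g) x * μ x‖ := norm_sub_le _ _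
      _ ≤ Cb * ε + ε * M := add_le_add h1 h2
      _ = (Cb + M) * ε := by ring
  have hd0 : d = 0 := by
    by_contra hne
    have hpos : 0 < ‖d‖ := norm_pos_iff.mpr hne
    have hC1 : 0 < Cb + M + 1 := by linarith
    have hεpos : 0 < ‖d‖ / (2 * (Cb + M + 1)) := by positivity
    have hle := hbd _ hεpos
    have h2 : (Cb + M) * (‖d‖ / (2 * (Cb + M + 1))) < ‖d‖ := by
      rw [← mul_div_assoc, div_lt_iff₀ (by positivity)]
      nlinarith [hpos, hCb0, hM0]
    linarith
  have := sub_eq_zero.mp hd0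
  exact this

end Functional2

end Stmt14

/-- The pairing `(λ,μ) ↦ Σ λ_{jk} μ_{jk}` identifies
`ℓ^{p',q'}(J,K)` isometrically with the dual of `ℓ^{p,q}_0(J,K)`. -/
theorem stmt_14 {J K : Type*} (p q : ℝ≥0∞) (hp : 0 < p) (hq : 0 < q) :
    (∀ μ : J × K → ℂ, ellpqNorm (conjExp p) (conjExp q) μ < ⊤ →
      (∀ f : J × K → ℂ, memEllpq0 p q f →
        Summable (fun jk : J × K => f jk * μ jk)) ∧
      (⨆ (f : J × K → ℂ) (_ : memEllpq0 p q f ∧ ellpqNorm p q f ≤ 1),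
          ENNReal.ofReal ‖∑' jk : J × K, f jk * μ jk‖)
        = ellpqNorm (conjExp p) (conjExp q) μ) ∧
    (∀ L : (J × K → ℂ) → ℂ,
      (∀ f g : J × K → ℂ, memEllpq0 p q f → memEllpq0 p q g →
        L (f + g) = L f + L g) →
      (∀ (c : ℂ) (f : J × K → ℂ), memEllpq0 p q f → L (c • f) = c * L f) →
      (∃ Cb : ℝ, 0 ≤ Cb ∧ ∀ f : J × K → ℂ, memEllpq0 p q f →
        ‖L f‖ ≤ Cb * (ellpqNorm p q f).toReal) →
      ∃! μ : J × K → ℂ,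
        ellpqNorm (conjExp p) (conjExp q) μ < ⊤ ∧
        (∀ f : J × K → ℂ, memEllpq0 p q f → L f = ∑' jk : J × K, f jk * μ jk) ∧
        (⨆ (f : J × K → ℂ) (_ : memEllpq0 p q f ∧ ellpqNorm p q f ≤ 1),
            ENNReal.ofReal ‖L f‖)
          = ellpqNorm (conjExp p) (conjExp q) μ) := by
  classical
  constructor
  · intro μ hμ
    exact ⟨fun f hf => Stmt14.pairing_summable hp hq hf.1 hμ,
      Stmt14.sup_pairing hp hq μ hμ⟩
  · intro L hadd hsmul hbound
    obtain ⟨Cb, hCb0, hCb⟩ := hbound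
    set μ : J × K → ℂ := fun x => L (fun y => if y = x then 1 else 0) with hμdef
    have hμle : ellpqNorm (conjExp p) (conjExp q) μ ≤ ENNReal.ofReal Cb :=
      Stmt14.mu_norm_le hp hq L hadd hsmul hCb0 hCb
    have hμlt : ellpqNorm (conjExp p) (conjExp q) μ < ⊤ :=
      lt_of_le_of_lt hμle ENNReal.ofReal_lt_top
    have hrep : ∀ f : J × K → ℂ, memEllpq0 p q f → L f = ∑' x : J × K, f x * μ x :=
      fun f hf => Stmt14.L_rep hp hq L hadd hsmul hCb0 hCb hf hμlt
    refine ⟨μ, ⟨hμlt, hrep, ?_⟩, ?_⟩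
    · have hcongr : ∀ f : J × K → ℂ,
          (⨆ (_ : memEllpq0 p q f ∧ ellpqNorm p q f ≤ 1), ENNReal.ofReal ‖L f‖)
          = ⨆ (_ : memEllpq0 p q f ∧ ellpqNorm p q f ≤ 1),
              ENNReal.ofReal ‖∑' x : J × K, f x * μ x‖ := by
        intro f
        by_cases h : memEllpq0 p q f ∧ ellpqNorm p q f ≤ 1
        · rw [iSup_pos h, iSup_pos h, hrep f h.1]
        · rw [iSup_neg h, iSup_neg h]
      rw [iSup_congr hcongr]
      exact Stmt14.sup_pairing hp hq μ hμlt
    · rintro ν ⟨hν1, hν2, hν3⟩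
      funext x
      have hmem : memEllpq0 p q (fun y : J × K => if y = x then (1:ℂ) else 0) :=
        Stmt14.memEllpq0_of_finite hp hq (Stmt14.single_fin x)
      have hx := hν2 _ hmem
      have hts : ∑' y : J × K, (if y = x then (1:ℂ) else 0) * ν y = ν x := by
        rw [tsum_congr (fun y => show (if y = x then (1:ℂ) else 0) * ν y
            = if y = x then ν x else 0 by
          split_ifs with h
          · rw [h, one_mul]
          · rw [zero_mul])]
        exact tsum_ite_eq x (fun _ => ν x)
      exact (hx.trans hts).symm
end

section
/- Let h > 0 and s, s' ∈ ℝ. The function h' ↦ (h+h')^s · h'^{s'} is bounded on (0,∞) if and only if s' ≥ 0 and s + s' ≤ 0; in that case, sup_{h' > 0} (h+h')^s h'^{s'} = (s'^{s'} · (−s−s')^{−s−s'} / (−s)^{−s}) · h^{s+s'}, with the convention 0^0 = 1. Moreover, the function h' ↦ (h+h')^s h'^{s'} tends to 0 as h' → 0⁺ and as h' → ∞ if and only if s' > 0 and s + s' < 0. -/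
open Set Filter

private lemma key_bound {h x a b : ℝ} (hh : 0 < h) (hx : 0 < x) (hb : 0 ≤ b) (hba : b ≤ a) :
    x ^ b * (h + x) ^ (-a) ≤ b ^ b * (a - b) ^ (a - b) / a ^ a * h ^ (b - a) := by
  have hhx : 0 < h + x := by linarith
  rcases eq_or_lt_of_le (hb.trans hba) with ha0 | ha0
  · have hb0 : b = 0 := le_antisymm (hba.trans_eq ha0.symm) hb
    simp [← ha0, hb0]
  rcases eq_or_lt_of_le hb with hb0 | hb0
  · have haa : (0:ℝ) < a ^ a := Real.rpow_pos_of_pos ha0 a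
    rw [← hb0]
    simp only [Real.rpow_zero, one_mul, sub_zero, zero_sub, div_self haa.ne', one_mul]
    exact Real.rpow_le_rpow_of_nonpos hh (by linarith) (by linarith)
  rcases eq_or_lt_of_le hba with hab | hab
  · subst hab
    have hbb : (0:ℝ) < b ^ b := Real.rpow_pos_of_pos hb0 b
    simp only [sub_self, Real.rpow_zero, mul_one, div_self hbb.ne', one_mul]
    have : x ^ b * (h + x) ^ (-b) = (x / (h + x)) ^ b := by
      rw [Real.div_rpow hx.le hhx.le, Real.rpow_neg hhx.le, div_eq_mul_inv]
    rw [this]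
    exact Real.rpow_le_one (by positivity) (by rw [div_le_one hhx]; linarith) hb
  · have hane : a ≠ 0 := ha0.ne'
    have habpos : (0:ℝ) < a - b := by linarith
    have hw : (a-b)/a + b/a = 1 := by field_simp; ring
    have hp1 : (0:ℝ) ≤ a*h/(a-b) := by positivity
    have hp2 : (0:ℝ) ≤ a*x/b := by positivity
    have G := Real.geom_mean_le_arith_mean2_weighted
      (by positivity : (0:ℝ) ≤ (a-b)/a) (by positivity : (0:ℝ) ≤ b/a) hp1 hp2 hw
    have hsum : (a-b)/a * (a*h/(a-b)) + b/a * (a*x/b) = h + x := by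
      field_simp
    rw [hsum] at G
    have G2 : (a*h/(a-b))^(a-b) * (a*x/b)^b ≤ (h+x)^a := by
      have h2 := Real.rpow_le_rpow (by positivity) G ha0.le
      rw [Real.mul_rpow (by positivity) (by positivity), ← Real.rpow_mul hp1,
        ← Real.rpow_mul hp2, div_mul_cancel₀ _ hane, div_mul_cancel₀ _ hane] at h2
      exact h2
    have e1 : (a*h/(a-b))^(a-b) = a^(a-b)*h^(a-b)/(a-b)^(a-b) := by
      rw [Real.div_rpow (by positivity) habpos.le, Real.mul_rpow ha0.le hh.le]
    have e2 : (a*x/b)^b = a^b*x^b/b^b := by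
      rw [Real.div_rpow (by positivity) hb0.le, Real.mul_rpow ha0.le hx.le]
    have eaa : a^(a-b) * a^b = a^a := by
      rw [← Real.rpow_add ha0]; ring_nf
    have target2 : x^b * (a^a * h^(a-b)) ≤ b^b*(a-b)^(a-b) * (h+x)^a := by
      have h3 := mul_le_mul_of_nonneg_right G2 (show (0:ℝ) ≤ (a-b)^(a-b)*b^b by positivity)
      rw [e1, e2] at h3
      calc x^b*(a^a*h^(a-b))
          = a^(a-b)*h^(a-b)/(a-b)^(a-b) * (a^b*x^b/b^b) * ((a-b)^(a-b)*b^b) := by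
            rw [← eaa]
            field_simp
        _ ≤ (h+x)^a * ((a-b)^(a-b)*b^b) := h3
        _ = b^b*(a-b)^(a-b) * (h+x)^a := by ring
    rw [Real.rpow_neg hhx.le, show b - a = -(a-b) by ring, Real.rpow_neg hh.le]
    have hrw : b^b*(a-b)^(a-b)/a^a * (h^(a-b))⁻¹ = (b^b*(a-b)^(a-b))/(a^a*h^(a-b)) := by
      field_simp
    rw [hrw, ← div_eq_mul_inv,
      div_le_div_iff₀ (Real.rpow_pos_of_pos hhx a) (by positivity)]
    calc x^b * (a^a*h^(a-b)) ≤ b^b*(a-b)^(a-b) * (h+x)^a := target2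
      _ = _ := by ring

private lemma ratio_tendsto (h t : ℝ) (hh : 0 < h) :
    Tendsto (fun x : ℝ => ((h+x)/x) ^ t) atTop (nhds 1) := by
  have h1 : Tendsto (fun x : ℝ => (h+x)/x) atTop (nhds 1) := by
    have h0 : Tendsto (fun x : ℝ => h/x + 1) atTop (nhds 1) := by
      have := (Tendsto.div_atTop (tendsto_const_nhds (x := h)) tendsto_id).add_const 1
      simpa using this
    apply h0.congr'
    filter_upwards [eventually_gt_atTop 0] with x hx
    field_simp
  have := h1.rpow_const (p := t) (Or.inl one_ne_zero)
  simpa using this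

private lemma tendsto_right_zero (h s s' : ℝ) (hh : 0 < h) (hs' : 0 < s') :
    Tendsto (fun x : ℝ => (h+x)^s * x^s') (nhdsWithin 0 (Set.Ioi 0)) (nhds 0) := by
  have h1 : Tendsto (fun x : ℝ => (h+x)^s) (nhdsWithin 0 (Set.Ioi 0)) (nhds (h^s)) := by
    have h2 : Tendsto (fun x : ℝ => h + x) (nhdsWithin 0 (Set.Ioi 0)) (nhds h) := by
      have := ((continuous_const.add continuous_id : Continuous fun x : ℝ => h + x)).tendsto (0:ℝ)
      convert this.mono_left nhdsWithin_le_nhds using 2 <;> simp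
    exact h2.rpow_const (Or.inl hh.ne')
  have h2 : Tendsto (fun x : ℝ => x ^ s') (nhdsWithin 0 (Set.Ioi 0)) (nhds 0) := by
    have c := (Real.continuousAt_rpow_const 0 s' (Or.inr hs'.le)).tendsto
    rw [Real.zero_rpow hs'.ne'] at c
    exact c.mono_left nhdsWithin_le_nhds
  simpa using h1.mul h2

private lemma tendsto_top_zero (h s s' : ℝ) (hh : 0 < h) (hss : s + s' < 0) :
    Tendsto (fun x : ℝ => (h+x)^s * x^s') atTop (nhds 0) := by
  have hx0 : Tendsto (fun x : ℝ => x ^ (s+s')) atTop (nhds 0) := by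
    have := tendsto_rpow_neg_atTop (y := -(s+s')) (by linarith)
    rw [neg_neg] at this
    exact this
  have h2 : Tendsto (fun x : ℝ => ((h+x)/x)^s * x^(s+s')) atTop (nhds 0) := by
    simpa using (ratio_tendsto h s hh).mul hx0
  apply h2.congr'
  filter_upwards [eventually_gt_atTop 0] with x hx
  have hhx : (0:ℝ) < h + x := by linarith
  have hxs : x ^ s ≠ 0 := (Real.rpow_pos_of_pos hx s).ne'
  rw [Real.div_rpow hhx.le hx.le, Real.rpow_add hx]
  field_simp

/-- For `h > 0` and `s, s' ∈ ℝ`, the function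
`h' ↦ (h+h')^s h'^{s'}` is bounded on `(0,∞)` iff `s' ≥ 0` and `s+s' ≤ 0`, in which
case its supremum equals `s'^{s'} (−s−s')^{−s−s'} / (−s)^{−s} · h^{s+s'}` (with
`0^0 = 1`, as for `Real.rpow`); and it tends to `0` both as `h' → 0⁺` and as
`h' → ∞` iff `s' > 0` and `s+s' < 0`. -/
theorem stmt_18 (h s s' : ℝ) (hh : 0 < h) :
    (BddAbove (Set.range fun h' : Set.Ioi (0 : ℝ) =>
        (h + (h' : ℝ)) ^ s * (h' : ℝ) ^ s') ↔ (0 ≤ s' ∧ s + s' ≤ 0)) ∧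
    ((0 ≤ s' ∧ s + s' ≤ 0) →
      (⨆ h' : Set.Ioi (0 : ℝ), (h + (h' : ℝ)) ^ s * (h' : ℝ) ^ s')
        = s' ^ s' * (-s - s') ^ (-s - s') / (-s) ^ (-s) * h ^ (s + s')) ∧
    ((Tendsto (fun h' : ℝ => (h + h') ^ s * h' ^ s')
        (nhdsWithin 0 (Set.Ioi 0)) (nhds 0) ∧
      Tendsto (fun h' : ℝ => (h + h') ^ s * h' ^ s') atTop (nhds 0)) ↔
      (0 < s' ∧ s + s' < 0)) := by
  haveI : Nonempty (Set.Ioi (0:ℝ)) := ⟨⟨1, by norm_num⟩⟩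
  set C : ℝ := s' ^ s' * (-s - s') ^ (-s - s') / (-s) ^ (-s) * h ^ (s + s') with hC
  have bound : 0 ≤ s' → s + s' ≤ 0 → ∀ x : ℝ, 0 < x → (h + x)^s * x^s' ≤ C := by
    intro hs' hss x hx
    have hk := key_bound (a := -s) (b := s') hh hx hs' (by linarith)
    rw [neg_neg] at hk
    calc (h+x)^s * x^s' = x^s' * (h+x)^s := mul_comm _ _
      _ ≤ s'^s' * (-s - s')^(-s - s')/(-s)^(-s) * h^(s' - -s) := hk
      _ = C := by rw [show s' - -s = s + s' from by ring]
  have hbdd : 0 ≤ s' → s + s' ≤ 0 → BddAbove (Set.range fun h' : Set.Ioi (0 : ℝ) =>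
      (h + (h' : ℝ)) ^ s * (h' : ℝ) ^ s') := by
    intro h1 h2
    refine ⟨C, ?_⟩
    rintro _ ⟨x, rfl⟩
    exact bound h1 h2 x (Set.mem_Ioi.mp x.2)
  refine ⟨⟨?_, fun hc => hbdd hc.1 hc.2⟩, ?_, ?_⟩
  · -- BddAbove → conditions
    rintro ⟨M, hM⟩
    have hM' : ∀ x : ℝ, 0 < x → (h+x)^s * x^s' ≤ M := by
      intro x hx
      exact hM (Set.mem_range_self (⟨x, hx⟩ : Set.Ioi (0:ℝ)))
    constructor
    · by_contra hs'
      push_neg at hs'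
      have hc : 0 < min (h^s) ((h+1)^s) :=
        lt_min (Real.rpow_pos_of_pos hh s) (Real.rpow_pos_of_pos (by linarith) s)
      have hlow : ∀ x : ℝ, 0 < x → x < 1 →
          min (h^s) ((h+1)^s) * x^s' ≤ (h+x)^s * x^s' := by
        intro x hx hx1
        apply mul_le_mul_of_nonneg_right _ (Real.rpow_pos_of_pos hx s').le
        rcases le_or_gt 0 s with hs | hs
        · exact (min_le_left _ _).trans (Real.rpow_le_rpow hh.le (by linarith) hs)
        · exact (min_le_right _ _).trans
            (Real.rpow_le_rpow_of_nonpos (by linarith) (by linarith) hs.le)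
      have hT : Tendsto (fun x : ℝ => x ^ s') (nhdsWithin 0 (Set.Ioi 0)) atTop := by
        have h2 := (tendsto_rpow_atTop (y := -s') (by linarith)).comp tendsto_inv_nhdsGT_zero
        apply h2.congr'
        filter_upwards [self_mem_nhdsWithin] with x hx
        simp only [Function.comp]
        rw [Real.inv_rpow (le_of_lt hx), Real.rpow_neg (le_of_lt hx), inv_inv]
      have hev : ∀ᶠ x in nhdsWithin (0:ℝ) (Set.Ioi 0),
          M < min (h^s) ((h+1)^s) * x^s' :=
        (hT.const_mul_atTop hc).eventually_gt_atTop M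
      obtain ⟨x, hxm, hx01⟩ :=
        (hev.and (Ioo_mem_nhdsGT_of_mem (by simp : (0:ℝ) ∈ Set.Ico (0:ℝ) 1))).exists
      exact absurd (hM' x hx01.1) (not_le.mpr (hxm.trans_le (hlow x hx01.1 hx01.2)))
    · by_contra hss
      push_neg at hss
      have hc : 0 < min (1:ℝ) ((2:ℝ)^s) := lt_min one_pos (Real.rpow_pos_of_pos two_pos s)
      have hlow : ∀ x : ℝ, h ≤ x → 0 < x →
          min 1 ((2:ℝ)^s) * x^(s+s') ≤ (h+x)^s * x^s' := by
        intro x hxh hx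
        rw [Real.rpow_add hx, ← mul_assoc]
        apply mul_le_mul_of_nonneg_right _ (Real.rpow_pos_of_pos hx s').le
        rcases le_or_gt 0 s with hs | hs
        · calc min 1 ((2:ℝ)^s) * x^s ≤ 1 * x^s :=
              mul_le_mul_of_nonneg_right (min_le_left _ _) (Real.rpow_pos_of_pos hx s).le
            _ = x^s := one_mul _
            _ ≤ (h+x)^s := Real.rpow_le_rpow hx.le (by linarith) hs
        · calc min 1 ((2:ℝ)^s) * x^s ≤ 2^s * x^s :=
              mul_le_mul_of_nonneg_right (min_le_right _ _) (Real.rpow_pos_of_pos hx s).le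
            _ = (2*x)^s := (Real.mul_rpow (by norm_num) hx.le).symm
            _ ≤ (h+x)^s := Real.rpow_le_rpow_of_nonpos (by linarith) (by linarith) hs.le
      have hT : Tendsto (fun x : ℝ => min (1:ℝ) ((2:ℝ)^s) * x^(s+s')) atTop atTop :=
        (tendsto_rpow_atTop hss).const_mul_atTop hc
      obtain ⟨x, hxM, hxh⟩ :=
        ((hT.eventually_gt_atTop M).and (eventually_ge_atTop (max h 1))).exists
      have hx : (0:ℝ) < x := lt_of_lt_of_le one_pos ((le_max_right h 1).trans hxh)
      have := hlow x ((le_max_left h 1).trans hxh) hx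
      have := hM' x hx
      linarith
  · -- supremum value
    rintro ⟨hs', hss⟩
    have hB := hbdd hs' hss
    apply le_antisymm
    · exact ciSup_le fun x => bound hs' hss x (Set.mem_Ioi.mp x.2)
    · -- C ≤ sup, three cases
      rcases eq_or_lt_of_le hs' with hs0 | hs0
      · -- s' = 0
        have hCval : C = h ^ s := by
          rw [hC, ← hs0]
          have hne : (-s) ^ (-s) ≠ 0 := by
            rcases eq_or_lt_of_le (show s ≤ 0 by linarith) with h1 | h1
            · rw [h1]; norm_num
            · exact (Real.rpow_pos_of_pos (by linarith) _).ne'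
          simp [div_self hne]
        rw [hCval]
        have hlim : Tendsto (fun x : ℝ => (h+x)^s * x^s') (nhdsWithin 0 (Set.Ioi 0))
            (nhds (h^s)) := by
          have h2 : Tendsto (fun x : ℝ => h + x) (nhdsWithin 0 (Set.Ioi 0)) (nhds h) := by
            have := ((continuous_const.add continuous_id : Continuous fun x : ℝ => h + x)).tendsto (0:ℝ)
            convert this.mono_left nhdsWithin_le_nhds using 2 <;> simp
          have h3 := h2.rpow_const (p := s) (Or.inl hh.ne')
          apply h3.congr
          intro x
          rw [← hs0, Real.rpow_zero, mul_one]
        refine le_of_tendsto hlim ?_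
        filter_upwards [self_mem_nhdsWithin] with x hx
        exact le_ciSup hB (⟨x, hx⟩ : Set.Ioi (0:ℝ))
      rcases eq_or_lt_of_le hss with hss0 | hss0
      · -- s + s' = 0
        have hCval : C = 1 := by
          rw [hC, show -s - s' = 0 from by linarith, hss0]
          have : -s = s' := by linarith
          rw [this]
          have hne : s' ^ s' ≠ 0 := (Real.rpow_pos_of_pos hs0 _).ne'
          simp [div_self hne]
        rw [hCval]
        have hlim : Tendsto (fun x : ℝ => (h+x)^s * x^s') atTop (nhds 1) := by
          have hr := ratio_tendsto h s hh
          have h1 : Tendsto (fun x : ℝ => ((h+x)/x)^s) atTop (nhds 1) := hr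
          apply h1.congr'
          filter_upwards [eventually_gt_atTop 0] with x hx
          have hhx : (0:ℝ) < h + x := by linarith
          rw [Real.div_rpow hhx.le hx.le, div_eq_mul_inv, ← Real.rpow_neg hx.le,
            show -s = s' from by linarith]
        refine le_of_tendsto hlim ?_
        filter_upwards [eventually_gt_atTop 0] with x hx
        exact le_ciSup hB (⟨x, hx⟩ : Set.Ioi (0:ℝ))
      · -- 0 < s', s + s' < 0 : attained maximum
        set A := -s with hA
        set B := s' with hBB
        set D := -s - s' with hD
        have hApos : 0 < A := by simp only [hA]; linarith
        have hDpos : 0 < D := by simp only [hD]; linarith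
        have hBpos : 0 < B := hs0
        have hABD : A = B + D := by simp only [hA, hBB, hD]; ring
        set x0 : ℝ := B * h / D with hx0
        have hx0pos : 0 < x0 := by positivity
        have hhx0 : h + x0 = A * h / D := by
          rw [hx0, hABD]; field_simp; ring
        have hfx0 : (h + x0)^s * x0^s' = C := by
          rw [hhx0, hx0]
          have e1 : (A*h/D) ^ s = D^A/(A^A * h^A) := by
            rw [show s = -A from by simp [hA], Real.rpow_neg (by positivity),
              Real.div_rpow (by positivity) hDpos.le,
              Real.mul_rpow hApos.le hh.le, inv_div]
          have e2 : (B*h/D) ^ s' = B^B * h^B / D^B := by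
            rw [show s' = B from rfl, Real.div_rpow (by positivity) hDpos.le,
              Real.mul_rpow hBpos.le hh.le]
          rw [e1, e2, hC]
          have e3 : (-s - s') ^ (-s - s') = D ^ D := rfl
          have e4 : (-s) ^ (-s) = A ^ A := rfl
          have e5 : s' ^ s' = B ^ B := rfl
          have e6 : h ^ (s + s') = h^B / h^A := by
            rw [show s + s' = B - A from by simp [hA, hBB]; ring, Real.rpow_sub hh]
          have e7 : D ^ A = D ^ D * D ^ B := by
            rw [← Real.rpow_add hDpos, show D + B = A from by rw [hABD]; ring]
          rw [e3, e4, e5, e6, e7]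
          have p1 : (0:ℝ) < A ^ A := Real.rpow_pos_of_pos hApos _
          have p2 : (0:ℝ) < D ^ B := Real.rpow_pos_of_pos hDpos _
          have p3 : (0:ℝ) < h ^ A := Real.rpow_pos_of_pos hh _
          field_simp
        rw [← hfx0]
        exact le_ciSup hB (⟨x0, hx0pos⟩ : Set.Ioi (0:ℝ))
  · -- tendsto iff
    constructor
    · rintro ⟨T0, Ti⟩
      constructor
      · -- 0 < s'
        have hx' : Tendsto (fun x : ℝ => x ^ s') (nhdsWithin 0 (Set.Ioi 0)) (nhds 0) := by
          have h1 : Tendsto (fun x : ℝ => (h+x)^(-s)) (nhdsWithin 0 (Set.Ioi 0))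
              (nhds (h^(-s))) := by
            have h2 : Tendsto (fun x : ℝ => h + x) (nhdsWithin 0 (Set.Ioi 0)) (nhds h) := by
              have := ((continuous_const.add continuous_id : Continuous fun x : ℝ => h + x)).tendsto (0:ℝ)
              convert this.mono_left nhdsWithin_le_nhds using 2 <;> simp
            exact h2.rpow_const (Or.inl hh.ne')
          have h3 := T0.mul h1
          rw [zero_mul] at h3
          apply h3.congr'
          filter_upwards [self_mem_nhdsWithin] with x hx
          have hhx : (0:ℝ) < h + x := by have : (0:ℝ) < x := hx; linarith
          rw [mul_comm ((h+x)^s), mul_assoc, ← Real.rpow_add hhx]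
          simp
        by_contra hs'
        push_neg at hs'
        have ev1 : ∀ᶠ x in nhdsWithin (0:ℝ) (Set.Ioi 0), 1 ≤ x ^ s' := by
          filter_upwards [Ioo_mem_nhdsGT_of_mem (by simp : (0:ℝ) ∈ Set.Ico (0:ℝ) 1)]
            with x hx
          exact Real.one_le_rpow_of_pos_of_le_one_of_nonpos hx.1 hx.2.le hs'
        have ev2 : ∀ᶠ x in nhdsWithin (0:ℝ) (Set.Ioi 0), x ^ s' < 1 :=
          hx'.eventually_lt_const one_pos
        obtain ⟨x, h1, h2⟩ := (ev1.and ev2).exists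
        linarith
      · -- s + s' < 0
        have hx' : Tendsto (fun x : ℝ => x ^ (s+s')) atTop (nhds 0) := by
          have h3 := Ti.mul (ratio_tendsto h (-s) hh)
          rw [zero_mul] at h3
          apply h3.congr'
          filter_upwards [eventually_gt_atTop 0] with x hx
          have hhx : (0:ℝ) < h + x := by linarith
          have e1 : ((h+x)/x)^(-s) = x^s/(h+x)^s := by
            rw [Real.rpow_neg (by positivity), Real.div_rpow hhx.le hx.le, inv_div]
          have hne : (h+x)^s ≠ 0 := (Real.rpow_pos_of_pos hhx s).ne'
          rw [e1, Real.rpow_add hx]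
          field_simp
        by_contra hss
        push_neg at hss
        have ev1 : ∀ᶠ x in (atTop : Filter ℝ), 1 ≤ x ^ (s+s') := by
          filter_upwards [eventually_ge_atTop 1] with x hx
          exact Real.one_le_rpow hx hss
        have ev2 : ∀ᶠ x in (atTop : Filter ℝ), x ^ (s+s') < 1 :=
          hx'.eventually_lt_const one_pos
        obtain ⟨x, h1, h2⟩ := (ev1.and ev2).exists
        linarith
    · rintro ⟨hs', hss⟩
      exact ⟨tendsto_right_zero h s s' hh hs', tendsto_top_zero h s s' hh hss⟩
end
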